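/- arXiv:1404.0950 — 8 statements merged into one kernel-verified Lean document; each statement's English description precedes it below -/
import Mathlib

section
/- Let (C,α,x) be an elusive triple in the Hamming graph H(m,q) where the code C has minimum distance δ = 3. Suppose that all pairs of (C,α,x)-associates π,π' with d(π,π') = 3 satisfy MC(π,π') = 3. Then q divides m. -/
variable {M Q : Type*}

/-- The set of entries in which two vertices of the Hamming graph differ. -/
def diffSet [Fintype M] [DecidableEq Q] (α β : M → Q) : Finset M :=
  Finset.univ.filter fun i => α i ≠ β i

/-- `GammaSet α r` is the set of vertices at Hamming distance exactly `r` from `α`. -/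
def GammaSet [Fintype M] [DecidableEq Q] (α : M → Q) (r : ℕ) : Set (M → Q) :=
  {β | hammingDist α β = r}

/-- The neighbour set `C₁` of a code `C`. -/
def neighbourSet [Fintype M] [DecidableEq Q] (C : Set (M → Q)) : Set (M → Q) :=
  {ν | ν ∉ C ∧ ∃ c ∈ C, hammingDist ν c = 1}

/-- An automorphism of the Hamming graph: a bijection of vertices preserving Hamming distance. -/
def IsAut [Fintype M] [DecidableEq Q] (x : (M → Q) ≃ (M → Q)) : Prop :=
  ∀ a b, hammingDist (x a) (x b) = hammingDist a b

/-- An elusive triple `(C, α, x)`. -/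
def IsElusiveTriple [Fintype M] [DecidableEq Q] (C : Set (M → Q)) (α : M → Q)
    (x : (M → Q) ≃ (M → Q)) : Prop :=
  IsAut x ∧ x '' neighbourSet C = neighbourSet C ∧ α ∈ C ∧ x α ∉ C

/-- A `(C,α,x)`-associate: a vertex in `Γ₂(α) ∩ C^x`. -/
def IsAssociate [Fintype M] [DecidableEq Q] (C : Set (M → Q)) (α : M → Q)
    (x : (M → Q) ≃ (M → Q)) (π : M → Q) : Prop :=
  π ∈ GammaSet α 2 ∧ π ∈ x '' C

/-- `MC C π π' = |C ∩ Γ₂(π) ∩ Γ₂(π')|`, the number of mutual codewords. -/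
noncomputable def MC [Fintype M] [DecidableEq Q] (C : Set (M → Q)) (π π' : M → Q) : ℕ :=
  (C ∩ GammaSet π 2 ∩ GammaSet π' 2).ncard

/-- The code `C` has minimum distance `δ`. -/
def HasMinDist [Fintype M] [DecidableEq Q] (C : Set (M → Q)) (δ : ℕ) : Prop :=
  IsLeast {d : ℕ | ∃ a ∈ C, ∃ b ∈ C, a ≠ b ∧ hammingDist a b = d} δ

/-- `IsCodeDist C β k` says that `d(β, C) = k`. -/
def IsCodeDist [Fintype M] [DecidableEq Q] (C : Set (M → Q)) (β : M → Q) (k : ℕ) : Prop :=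
  IsLeast {d : ℕ | ∃ γ ∈ C, hammingDist β γ = d} k

/-- `update2 α i j a b` is the vertex `γ(α|i,j|a,b)`. -/
def update2 [DecidableEq M] (α : M → Q) (i j : M) (a b : Q) : M → Q :=
  Function.update (Function.update α i a) j b

/-- `update3 α i j k a b c` is the vertex `γ(α|i,j,k|a,b,c)`. -/
def update3 [DecidableEq M] (α : M → Q) (i j k : M) (a b c : Q) : M → Q :=
  Function.update (Function.update (Function.update α i a) j b) k c

/- ----------------------------------------------------------------------- -/
/- Auxiliary development for the proof of `stmt_0`.                          -/
/- ----------------------------------------------------------------------- -/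

namespace StmtAux

open Finset Polynomial

variable {m q : ℕ}

/-- Hamming distance is the cardinality of the disagreement set. -/
lemma hd_def (v θ : Fin m → Fin q) :
    hammingDist v θ = (Finset.univ.filter fun j => v j ≠ θ j).card := rfl

/-- Splitting a filtered-card over `univ` at an element `i`. -/
lemma card_filter_split (P : Fin m → Prop) [DecidablePred P] (i : Fin m) :
    (Finset.univ.filter P).card
      = ((Finset.univ.erase i).filter P).card + (if P i then 1 else 0) := by
  conv_lhs => rw [← Finset.insert_erase (Finset.mem_univ i)]
  rw [Finset.filter_insert]
  split_ifs with h
  · rw [Finset.card_insert_of_notMem]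
    intro hmem
    exact (Finset.mem_erase.1 (Finset.mem_filter.1 hmem).1).1 rfl
  · simp

lemma hammingDist_split (v θ : Fin m → Fin q) (i : Fin m) :
    hammingDist v θ
      = ((Finset.univ.erase i).filter fun j => v j ≠ θ j).card
        + (if v i = θ i then 0 else 1) := by
  rw [hd_def, card_filter_split (fun j => v j ≠ θ j) i]
  by_cases h : v i = θ i <;> simp [h]

lemma dist_update (v θ : Fin m → Fin q) (i : Fin m) (b : Fin q) :
    hammingDist v (Function.update θ i b)
      = ((Finset.univ.erase i).filter fun j => v j ≠ θ j).card
        + (if v i = b then 0 else 1) := by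
  rw [hammingDist_split v (Function.update θ i b) i]
  congr 1
  · congr 1
    apply Finset.filter_congr
    intro j hj
    rw [Function.update_of_ne (Finset.mem_erase.1 hj).1]
  · rw [Function.update_self]

/-- The neighbour sphere of a vertex, as a `Finset`. -/
def nbrF (θ : Fin m → Fin q) : Finset (Fin m → Fin q) :=
  Finset.univ.filter fun ν => hammingDist θ ν = 1

lemma dist_update_self (θ : Fin m → Fin q) (i : Fin m) {b : Fin q} (hb : b ≠ θ i) :
    hammingDist θ (Function.update θ i b) = 1 := by
  rw [dist_update]
  have h0 : ((Finset.univ.erase i).filter fun j => θ j ≠ θ j) = ∅ := by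
    apply Finset.filter_false_of_mem
    intro j _
    simp
  rw [h0]
  simp [Ne.symm hb]

lemma eq_update_of_dist_one {θ ν : Fin m → Fin q} (h : hammingDist θ ν = 1) :
    ∃ i, ν i ≠ θ i ∧ ν = Function.update θ i (ν i) := by
  rw [hd_def] at h
  obtain ⟨i, hi⟩ := Finset.card_eq_one.1 h
  have hmem : ∀ j, θ j ≠ ν j ↔ j = i := by
    intro j
    constructor
    · intro hj
      have : j ∈ Finset.univ.filter fun j => θ j ≠ ν j :=
        Finset.mem_filter.2 ⟨Finset.mem_univ _, hj⟩
      rw [hi] at this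
      exact Finset.mem_singleton.1 this
    · intro hji
      have hmemi : j ∈ Finset.univ.filter fun j => θ j ≠ ν j := by
        rw [hi]
        exact Finset.mem_singleton.2 hji
      exact (Finset.mem_filter.1 hmemi).2
  refine ⟨i, fun hc => ((hmem i).2 rfl) hc.symm, ?_⟩
  funext j
  by_cases hj : j = i
  · subst hj; rw [Function.update_self]
  · rw [Function.update_of_ne hj]
    by_contra hc
    exact hj ((hmem j).1 fun he => hc he.symm)

/-- Reindexing a sum over the neighbour sphere by (coordinate, new value) pairs. -/
lemma sum_nbr (θ : Fin m → Fin q) (f : (Fin m → Fin q) → Polynomial ℤ) :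
    ∑ ν ∈ nbrF θ, f ν
      = ∑ p ∈ (Finset.univ : Finset (Fin m)).sigma
            (fun i => Finset.univ.erase (θ i)), f (Function.update θ p.1 p.2) := by
  refine (Finset.sum_bij (fun p _ => Function.update θ p.1 p.2) ?_ ?_ ?_ ?_).symm
  · rintro ⟨i, b⟩ hp
    have hb : b ≠ θ i := (Finset.mem_erase.1 (Finset.mem_sigma.1 hp).2).1
    exact Finset.mem_filter.2 ⟨Finset.mem_univ _, dist_update_self θ i hb⟩
  · rintro ⟨i, b⟩ hp ⟨i', b'⟩ hp' hE
    have hb : b ≠ θ i := (Finset.mem_erase.1 (Finset.mem_sigma.1 hp).2).1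
    have hE' : Function.update θ i b = Function.update θ i' b' := hE
    by_cases hii : i = i'
    · subst hii
      have hbb : b = b' := by
        have h2 := congrFun hE' i
        rwa [Function.update_self, Function.update_self] at h2
      subst hbb; rfl
    · exfalso
      have h2 := congrFun hE' i
      rw [Function.update_self, Function.update_of_ne (fun hc => hii hc)] at h2
      exact hb h2
  · intro ν hν
    have h1 : hammingDist θ ν = 1 := (Finset.mem_filter.1 hν).2
    obtain ⟨i, hne, hup⟩ := eq_update_of_dist_one h1
    refine ⟨⟨i, ν i⟩, ?_, hup.symm⟩
    exact Finset.mem_sigma.2 ⟨Finset.mem_univ _,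
      Finset.mem_erase.2 ⟨hne, Finset.mem_univ _⟩⟩
  · intro p hp; rfl

/-- The key local count: the generating polynomial of distances from `v` to the
neighbour sphere of `θ`. -/
lemma inner_sum (hq : 2 ≤ q) (v θ : Fin m → Fin q) :
    ∑ ν ∈ nbrF θ, (X : Polynomial ℤ) ^ hammingDist v ν
      = C ((hammingDist v θ : ℤ)) * X ^ (hammingDist v θ - 1)
        + C ((hammingDist v θ : ℤ) * ((q : ℤ) - 2)) * X ^ hammingDist v θ
        + C (((m : ℤ) - (hammingDist v θ : ℤ)) * ((q : ℤ) - 1))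
            * X ^ (hammingDist v θ + 1) := by
  set s := hammingDist v θ with hs
  have hsm : s ≤ m := by
    have := @hammingDist_le_card_fintype (Fin m) (fun _ => Fin q) _ _ v θ
    simpa using this
  rw [sum_nbr, Finset.sum_sigma]
  have hinner : ∀ i : Fin m,
      (∑ b ∈ Finset.univ.erase (θ i),
        (X : Polynomial ℤ) ^ hammingDist v (Function.update θ i b))
      = if v i = θ i then (q - 1) • (X : Polynomial ℤ) ^ (s + 1)
        else (X : Polynomial ℤ) ^ (s - 1) + (q - 2) • (X : Polynomial ℤ) ^ s := by
    intro i
    set e := ((Finset.univ.erase i).filter fun j => v j ≠ θ j).card with he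
    have hse : s = e + (if v i = θ i then 0 else 1) := hammingDist_split v θ i
    by_cases hvi : v i = θ i
    · rw [if_pos hvi]
      have hes : e = s := by rw [hse, if_pos hvi, add_zero]
      have hcongr : ∀ b ∈ Finset.univ.erase (θ i),
          (X : Polynomial ℤ) ^ hammingDist v (Function.update θ i b)
            = (X : Polynomial ℤ) ^ (s + 1) := by
        intro b hb
        have hbne : b ≠ θ i := (Finset.mem_erase.1 hb).1
        rw [dist_update, ← he, if_neg (fun hc => hbne (by rw [← hc]; exact hvi)), hes]
      rw [Finset.sum_congr rfl hcongr, Finset.sum_const, Finset.card_erase_of_mem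
        (Finset.mem_univ _), Finset.card_univ, Fintype.card_fin]
    · rw [if_neg hvi]
      have hes : s = e + 1 := by rw [hse, if_neg hvi]
      have hvimem : v i ∈ Finset.univ.erase (θ i) :=
        Finset.mem_erase.2 ⟨hvi, Finset.mem_univ _⟩
      rw [← Finset.add_sum_erase _ _ hvimem]
      have hterm : hammingDist v (Function.update θ i (v i)) = e := by
        rw [dist_update, ← he, if_pos rfl, add_zero]
      have hcongr : ∀ b ∈ (Finset.univ.erase (θ i)).erase (v i),
          (X : Polynomial ℤ) ^ hammingDist v (Function.update θ i b)
            = (X : Polynomial ℤ) ^ s := by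
        intro b hb
        have hbv : b ≠ v i := (Finset.mem_erase.1 hb).1
        rw [dist_update, ← he, if_neg (fun hc => hbv hc.symm), ← hes]
      rw [hterm, Finset.sum_congr rfl hcongr, Finset.sum_const,
        Finset.card_erase_of_mem hvimem, Finset.card_erase_of_mem (Finset.mem_univ _),
        Finset.card_univ, Fintype.card_fin]
      have hidx : e = s - 1 := by omega
      rw [hidx]
      have hq2 : q - 1 - 1 = q - 2 := by omega
      rw [hq2]
  rw [Finset.sum_congr rfl (fun i _ => hinner i)]
  rw [Finset.sum_ite, Finset.sum_const, Finset.sum_const]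
  have hcard1 : (Finset.univ.filter fun i => v i = θ i).card = m - s := by
    have h2 : (Finset.univ.filter fun i => ¬ v i = θ i).card = s := by
      rw [hs, hd_def]
    have h3 := Finset.card_filter_add_card_filter_not
      (s := (Finset.univ : Finset (Fin m))) (p := fun i => v i = θ i)
    rw [Finset.card_univ, Fintype.card_fin] at h3
    omega
  have hcard2 : (Finset.univ.filter fun i => ¬ v i = θ i).card = s := by
    rw [hs, hd_def]
  rw [hcard1, hcard2]
  -- now pure algebra with natural-number casts
  have hc1 : ((q - 1 : ℕ) : ℤ) = (q : ℤ) - 1 := by omega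
  have hc2 : ((q - 2 : ℕ) : ℤ) = (q : ℤ) - 2 := by omega
  have hc3 : ((m - s : ℕ) : ℤ) = (m : ℤ) - (s : ℤ) := by omega
  rw [smul_smul, smul_add]
  simp only [nsmul_eq_mul]
  have e1 : (((m - s) * (q - 1) : ℕ) : Polynomial ℤ)
      = C (((m : ℤ) - (s : ℤ)) * ((q : ℤ) - 1)) := by
    rw [← Polynomial.C_eq_natCast]
    congr 1
    rw [Nat.cast_mul, Nat.cast_sub hsm, Nat.cast_sub (show 1 ≤ q by omega)]
    push_cast
    ring
  have e2 : ((s : ℕ) : Polynomial ℤ) = C ((s : ℕ) : ℤ) := by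
    rw [← Polynomial.C_eq_natCast]
  have e3 : (((q - 2) : ℕ) : Polynomial ℤ) = C ((q : ℤ) - 2) := by
    have h : ((q - 2 : ℕ) : ℤ) = (q : ℤ) - 2 := by omega
    rw [← h, ← Polynomial.C_eq_natCast]
  rw [e1, e2, e3]
  simp only [Polynomial.C_mul]
  ring

/-- The differential operator `L f = (1-X)(1+(q-1)X) f' + m(q-1) X f`. -/
noncomputable def Lop (m q : ℕ) (f : Polynomial ℤ) : Polynomial ℤ :=
  (1 - X) * (1 + C ((q : ℤ) - 1) * X) * derivative f
    + C ((m : ℤ) * ((q : ℤ) - 1)) * X * f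

lemma Lop_X_pow (s : ℕ) :
    Lop m q ((X : Polynomial ℤ) ^ s)
      = C ((s : ℤ)) * X ^ (s - 1) + C ((s : ℤ) * ((q : ℤ) - 2)) * X ^ s
        + C (((m : ℤ) - (s : ℤ)) * ((q : ℤ) - 1)) * X ^ (s + 1) := by
  cases s with
  | zero =>
    simp only [Lop, pow_zero, derivative_one, mul_zero, Nat.cast_zero, zero_add,
      C_0, zero_mul, pow_one]
    ring
  | succ n =>
    simp only [Lop, derivative_X_pow]
    push_cast
    simp only [Nat.add_sub_cancel, map_mul, map_add, map_sub, map_one, map_ofNat]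
    ring

end StmtAux

/-- If `(C,α,x)` is an elusive triple in `H(m,q)` with minimum distance 3 and
every pair of associates at Hamming distance 3 has exactly 3 mutual codewords, then `q ∣ m`. -/
theorem stmt_0 (m q : ℕ) (C : Set (Fin m → Fin q)) (α : Fin m → Fin q)
    (x : (Fin m → Fin q) ≃ (Fin m → Fin q))
    (hET : IsElusiveTriple C α x) (hδ : HasMinDist C 3)
    (hMC : ∀ π π' : Fin m → Fin q, IsAssociate C α x π → IsAssociate C α x π' →
      hammingDist π π' = 3 → MC C π π' = 3) :
    q ∣ m := by
  classical
  open Finset Polynomial StmtAux in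
  obtain ⟨hAut, hN, hαC, hβC⟩ := hET
  obtain ⟨⟨a, ha, b, hb, hab, hd3⟩, hlb⟩ := hδ
  -- the alphabet has at least two letters
  have hq : 2 ≤ q := by
    by_contra h
    push_neg at h
    apply hab
    funext i
    have hlt1 : (a i).1 < q := (a i).2
    have hlt2 : (b i).1 < q := (b i).2
    exact Fin.ext (by omega)
  -- the minimum-distance lower bound
  have hmin : ∀ u ∈ C, ∀ w ∈ C, u ≠ w → 3 ≤ hammingDist u w :=
    fun u hu w hw hne => hlb ⟨u, hu, w, hw, hne, rfl⟩
  set β := x α with hβ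
  -- Finset versions of `C` and `C₁`
  set CF : Finset (Fin m → Fin q) := (Set.toFinite C).toFinset with hCF
  set C1F : Finset (Fin m → Fin q) := (Set.toFinite (neighbourSet C)).toFinset with hC1F
  have hmemCF : ∀ u, u ∈ CF ↔ u ∈ C := fun u => Set.Finite.mem_toFinset _
  have hmemC1F : ∀ u, u ∈ C1F ↔ u ∈ neighbourSet C := fun u => Set.Finite.mem_toFinset _
  -- `C₁` is the disjoint union of the neighbour spheres of codewords
  have hC1eq : C1F = CF.biUnion nbrF := by
    ext ν
    rw [hmemC1F, Finset.mem_biUnion]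
    constructor
    · rintro ⟨hnc, c, hc, hd⟩
      refine ⟨c, (hmemCF c).2 hc, ?_⟩
      exact Finset.mem_filter.2 ⟨Finset.mem_univ _, by rwa [hammingDist_comm]⟩
    · rintro ⟨c, hc, hd⟩
      have hc' : c ∈ C := (hmemCF c).1 hc
      have hd' : hammingDist c ν = 1 := (Finset.mem_filter.1 hd).2
      refine ⟨?_, c, hc', by rwa [hammingDist_comm]⟩
      intro hν
      rcases eq_or_ne ν c with rfl | hne
      · rw [hammingDist_self] at hd'; omega
      · have h3 := hmin ν hν c hc' hne
        rw [hammingDist_comm] at hd'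
        omega
  have hdisj : (CF : Set (Fin m → Fin q)).PairwiseDisjoint nbrF := by
    intro θ hθ θ' hθ' hne
    simp only [Function.onFun]
    rw [Finset.disjoint_left]
    intro ν hν hν'
    have h1 : hammingDist θ ν = 1 := (Finset.mem_filter.1 hν).2
    have h2 : hammingDist θ' ν = 1 := (Finset.mem_filter.1 hν').2
    have h3 : 3 ≤ hammingDist θ θ' :=
      hmin θ ((hmemCF θ).1 hθ) θ' ((hmemCF θ').1 hθ') hne
    have htri := hammingDist_triangle θ ν θ'
    rw [hammingDist_comm ν θ'] at htri
    omega
  -- distance enumerator polynomials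
  set P : (Fin m → Fin q) → Polynomial ℤ :=
    fun v => ∑ θ ∈ CF, (X : Polynomial ℤ) ^ hammingDist v θ with hP
  set S : (Fin m → Fin q) → Polynomial ℤ :=
    fun v => ∑ ν ∈ C1F, (X : Polynomial ℤ) ^ hammingDist v ν with hS
  -- the key identity : L (P v) = S v
  have hLP : ∀ v, Lop m q (P v) = S v := by
    intro v
    have h1 : Lop m q (P v) = ∑ θ ∈ CF, Lop m q ((X : Polynomial ℤ) ^ hammingDist v θ) := by
      simp only [Lop, hP, derivative_sum, Finset.mul_sum, ← Finset.sum_add_distrib]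
    rw [h1]
    have h2 : ∀ θ ∈ CF, Lop m q ((X : Polynomial ℤ) ^ hammingDist v θ)
        = ∑ ν ∈ nbrF θ, (X : Polynomial ℤ) ^ hammingDist v ν := by
      intro θ _
      rw [Lop_X_pow, ← inner_sum hq v θ]
    rw [Finset.sum_congr rfl h2, ← Finset.sum_biUnion hdisj, ← hC1eq]
  -- `S α = S β`, by the symmetry `x`
  have hSS : S α = S β := by
    rw [hS]
    refine Finset.sum_bij (fun ν _ => x ν) ?_ ?_ ?_ ?_
    · intro ν hν
      rw [hmemC1F] at hν ⊢
      rw [← hN]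
      exact Set.mem_image_of_mem _ hν
    · intro ν₁ _ ν₂ _ h
      exact x.injective h
    · intro ν' hν'
      rw [hmemC1F, ← hN] at hν'
      obtain ⟨ν, hν, hxν⟩ := hν'
      exact ⟨ν, (hmemC1F ν).2 hν, hxν⟩
    · intro ν _
      rw [hβ, hAut α ν]
  -- the difference polynomial
  set D : Polynomial ℤ := P α - P β with hD
  have hLD : (1 - X) * (1 + Polynomial.C ((q : ℤ) - 1) * X) * Polynomial.derivative D
      + Polynomial.C ((m : ℤ) * ((q : ℤ) - 1)) * X * D = 0 := by
    have h1 : Lop m q (P α) = Lop m q (P β) := by rw [hLP α, hLP β, hSS]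
    simp only [Lop] at h1
    rw [hD, derivative_sub]
    linear_combination h1
  -- `D` is nonzero since `D(0) = 1`
  have hPα0 : (P α).eval 0 = 1 := by
    rw [hP]
    simp only [eval_finset_sum, eval_pow, eval_X]
    rw [Finset.sum_eq_single_of_mem α ((hmemCF α).2 hαC)]
    · rw [hammingDist_self, pow_zero]
    · intro θ hθ hne
      have : hammingDist α θ ≠ 0 := fun h => hne (eq_of_hammingDist_eq_zero h).symm
      exact zero_pow this
  have hPβ0 : (P β).eval 0 = 0 := by
    rw [hP]
    simp only [eval_finset_sum, eval_pow, eval_X]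
    apply Finset.sum_eq_zero
    intro θ hθ
    have hne : β ≠ θ := by
      intro h
      exact hβC (h ▸ (hmemCF θ).1 hθ)
    have : hammingDist β θ ≠ 0 := fun h => hne (eq_of_hammingDist_eq_zero h)
    exact zero_pow this
  have hD0 : D ≠ 0 := by
    intro h
    have : D.eval 0 = 1 := by rw [hD, eval_sub, hPα0, hPβ0]; ring
    rw [h] at this
    simp at this
  -- root multiplicity of `D` at 1
  obtain ⟨U, hDU, hUdvd⟩ := D.exists_eq_pow_rootMultiplicity_mul_and_not_dvd hD0 1
  generalize hk : D.rootMultiplicity 1 = k at hDU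
  have hU1 : U.eval 1 ≠ 0 := by
    intro h
    exact hUdvd (Polynomial.dvd_iff_isRoot.2 h)
  have hq1ne : ((q : ℤ) - 1) ≠ 0 := by
    have : (2 : ℤ) ≤ (q : ℤ) := by exact_mod_cast hq
    omega
  rcases Nat.eq_zero_or_pos k with hk0 | hkpos
  · -- multiplicity 0 : evaluate the ODE at 1 to get `m (q-1) = 0`, i.e. `m = 0`
    rw [hk0, pow_zero, one_mul] at hDU
    have hD1 : D.eval 1 ≠ 0 := by rw [hDU]; exact hU1
    have := congrArg (Polynomial.eval 1) hLD
    simp only [eval_add, eval_mul, eval_sub, eval_one, eval_X, eval_C, eval_zero,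
      sub_self, zero_mul, mul_one] at this
    have hmq : (m : ℤ) * ((q : ℤ) - 1) = 0 := by
      rcases mul_eq_zero.1 (by linarith [this] : ((m : ℤ) * ((q : ℤ) - 1)) * D.eval 1 = 0) with
        h | h
      · exact h
      · exact absurd h hD1
    have hm0 : m = 0 := by
      rcases mul_eq_zero.1 hmq with h | h
      · exact_mod_cast h
      · exact absurd h hq1ne
    rw [hm0]
    exact dvd_zero q
  · -- positive multiplicity : factor and evaluate at 1 to get `m (q-1) = q k`
    obtain ⟨k', rfl⟩ : ∃ k', k = k' + 1 := ⟨k - 1, by omega⟩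
    -- compute the derivative of D
    have hDder : Polynomial.derivative D
        = Polynomial.C ((k' : ℤ) + 1) * (X - Polynomial.C 1) ^ k' * U
          + (X - Polynomial.C 1) ^ (k' + 1) * Polynomial.derivative U := by
      rw [hDU, derivative_mul, derivative_pow]
      simp only [derivative_sub, derivative_X, derivative_C, sub_zero, mul_one,
        Nat.add_sub_cancel]
      push_cast
      ring
    -- the quotient relation
    set R : Polynomial ℤ :=
      -((1 + Polynomial.C ((q : ℤ) - 1) * X) * Polynomial.C ((k' : ℤ) + 1) * U)
        + (1 - X) * (1 + Polynomial.C ((q : ℤ) - 1) * X) * Polynomial.derivative U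
        + Polynomial.C ((m : ℤ) * ((q : ℤ) - 1)) * X * U with hR
    have hfact : (X - Polynomial.C 1) ^ (k' + 1) * R = 0 := by
      rw [← hLD, hDder, hDU, hR]
      rw [pow_succ]
      simp only [map_one]
      ring
    have hXC : ((X : Polynomial ℤ) - Polynomial.C 1) ^ (k' + 1) ≠ 0 :=
      pow_ne_zero _ (Polynomial.X_sub_C_ne_zero 1)
    have hR0 : R = 0 := by
      rcases mul_eq_zero.1 hfact with h | h
      · exact absurd h hXC
      · exact h
    -- evaluate `R` at 1
    have := congrArg (Polynomial.eval 1) hR0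
    simp only [hR, eval_add, eval_neg, eval_mul, eval_sub, eval_one, eval_X, eval_C,
      eval_zero, sub_self, zero_mul, mul_one] at this
    -- this : -((1 + (q-1)) * (k'+1) * U.eval 1) + 0 + m(q-1) * U.eval 1 = 0
    have hkey : (m : ℤ) * ((q : ℤ) - 1) = (q : ℤ) * ((k' : ℤ) + 1) := by
      have hfac : ((m : ℤ) * ((q : ℤ) - 1) - (q : ℤ) * ((k' : ℤ) + 1)) * U.eval 1 = 0 := by
        linear_combination this
      rcases mul_eq_zero.1 hfac with h | h
      · linarith
      · exact absurd h hU1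
    -- conclude
    have hnat : m * (q - 1) = q * (k' + 1) := by
      have h1 : ((m * (q - 1) : ℕ) : ℤ) = ((q * (k' + 1) : ℕ) : ℤ) := by
        push_cast
        rw [Nat.cast_sub (by omega : 1 ≤ q)]
        push_cast
        linarith [hkey]
      exact_mod_cast h1
    have hdvd : q ∣ m * (q - 1) := ⟨k' + 1, hnat⟩
    have hco : Nat.Coprime q (q - 1) := by
      obtain ⟨p, rfl⟩ : ∃ p, q = p + 1 := ⟨q - 1, by omega⟩
      simp
    exact hco.dvd_of_dvd_mul_right hdvd
end

section
/- Let (C,α,x) be an elusive triple in H(m,q) where the code C has minimum distance δ ≥ 3, and let π, π' be (C,α,x)-associates with d(π,π') = 4. Then 1 ≤ MC(π,π') ≤ 2. -/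
variable {M Q : Type*}

section Aux
variable [Fintype M] [DecidableEq Q]

lemma mem_diffSet {u v : M → Q} {p : M} : p ∈ diffSet u v ↔ u p ≠ v p := by
  simp [diffSet]

lemma diffSet_comm (u v : M → Q) : diffSet u v = diffSet v u := by
  ext p; simp [mem_diffSet, ne_comm]

lemma hd_eq (u v : M → Q) : hammingDist u v = (diffSet u v).card := rfl

/-- Key combinatorial lemma: a vertex β at distance 2 from both π and π',
at distance ≥ 3 and ≤ 4 from α, where π, π' are at distance 2 from α with
disjoint difference sets, is uniquely determined. -/
lemma key {α π π' β : M → Q}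
    (hA : (diffSet α π).card = 2) (hA' : (diffSet α π').card = 2)
    (hdisj : Disjoint (diffSet α π) (diffSet α π'))
    (hβπ : (diffSet β π).card = 2) (hβπ' : (diffSet β π').card = 2)
    (hT3 : 3 ≤ (diffSet α β).card) (hT4 : (diffSet α β).card ≤ 4) :
    β = fun p => if α p = π p then π' p else π p := by
  classical
  set T := diffSet α β with hT
  set A := diffSet α π with hAdef
  set A' := diffSet α π' with hA'def
  -- (T \ A) ∪ (A \ T) ⊆ diffSet β π
  have hsub1 : (T \ A) ∪ (A \ T) ⊆ diffSet β π := by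
    intro p hp
    rcases Finset.mem_union.mp hp with h | h
    · rcases Finset.mem_sdiff.mp h with ⟨h1, h2⟩
      rw [hT, mem_diffSet] at h1
      rw [hAdef, mem_diffSet, not_not] at h2
      rw [mem_diffSet]
      intro hc; exact h1 (by rw [h2, hc])
    · rcases Finset.mem_sdiff.mp h with ⟨h1, h2⟩
      rw [hAdef, mem_diffSet] at h1
      rw [hT, mem_diffSet, not_not] at h2
      rw [mem_diffSet]
      intro hc; exact h1 (by rw [h2, hc])
  have hsub1' : (T \ A') ∪ (A' \ T) ⊆ diffSet β π' := by
    intro p hp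
    rcases Finset.mem_union.mp hp with h | h
    · rcases Finset.mem_sdiff.mp h with ⟨h1, h2⟩
      rw [hT, mem_diffSet] at h1
      rw [hA'def, mem_diffSet, not_not] at h2
      rw [mem_diffSet]
      intro hc; exact h1 (by rw [h2, hc])
    · rcases Finset.mem_sdiff.mp h with ⟨h1, h2⟩
      rw [hA'def, mem_diffSet] at h1
      rw [hT, mem_diffSet, not_not] at h2
      rw [mem_diffSet]
      intro hc; exact h1 (by rw [h2, hc])
  have hdis1 : Disjoint (T \ A) (A \ T) := by
    exact Finset.disjoint_left.mpr fun p hp hq =>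
      (Finset.mem_sdiff.mp hq).2 (Finset.mem_sdiff.mp hp).1
  have hdis1' : Disjoint (T \ A') (A' \ T) := by
    exact Finset.disjoint_left.mpr fun p hp hq =>
      (Finset.mem_sdiff.mp hq).2 (Finset.mem_sdiff.mp hp).1
  have c1 : (T \ A).card + (A \ T).card ≤ 2 := by
    rw [← Finset.card_union_of_disjoint hdis1, ← hβπ]
    exact Finset.card_le_card hsub1
  have c1' : (T \ A').card + (A' \ T).card ≤ 2 := by
    rw [← Finset.card_union_of_disjoint hdis1', ← hβπ']
    exact Finset.card_le_card hsub1'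
  -- basic card identities
  have e1 : (T ∩ A).card + (T \ A).card = T.card := Finset.card_inter_add_card_sdiff T A
  have e1' : (T ∩ A').card + (T \ A').card = T.card := Finset.card_inter_add_card_sdiff T A'
  have e2 : (A ∩ T).card + (A \ T).card = 2 := by
    rw [Finset.card_inter_add_card_sdiff A T, hA]
  have e2' : (A' ∩ T).card + (A' \ T).card = 2 := by
    rw [Finset.card_inter_add_card_sdiff A' T, hA']
  have ecomm : (T ∩ A).card = (A ∩ T).card := by rw [Finset.inter_comm]
  have ecomm' : (T ∩ A').card = (A' ∩ T).card := by rw [Finset.inter_comm]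
  have sub2 : T ∩ A' ⊆ T \ A := by
    intro p hp
    rcases Finset.mem_inter.mp hp with ⟨h1, h2⟩
    exact Finset.mem_sdiff.mpr ⟨h1, fun hc => (Finset.disjoint_left.mp hdisj hc) h2⟩
  have sub2' : T ∩ A ⊆ T \ A' := by
    intro p hp
    rcases Finset.mem_inter.mp hp with ⟨h1, h2⟩
    exact Finset.mem_sdiff.mpr ⟨h1, fun hc => (Finset.disjoint_left.mp hdisj h2) hc⟩
  have i2 : (T ∩ A').card ≤ (T \ A).card := Finset.card_le_card sub2
  have i2' : (T ∩ A).card ≤ (T \ A').card := Finset.card_le_card sub2'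
  -- derive: each inter has card 2
  have hTA : (T ∩ A).card = 2 ∧ (T ∩ A').card = 2 ∧ (T \ A).card = 2 ∧ (T \ A').card = 2 ∧
      T.card = 4 := by omega
  obtain ⟨hTA2, hTA'2, hTsA, hTsA', hT4'⟩ := hTA
  -- A ⊆ T and A' ⊆ T
  have hAT : A ⊆ T := by
    have : (A \ T).card = 0 := by omega
    have h0 : A \ T = ∅ := Finset.card_eq_zero.mp this
    intro p hp
    by_contra hc
    have : p ∈ A \ T := Finset.mem_sdiff.mpr ⟨hp, hc⟩
    simp [h0] at this
  have hA'T : A' ⊆ T := by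
    have : (A' \ T).card = 0 := by omega
    have h0 : A' \ T = ∅ := Finset.card_eq_zero.mp this
    intro p hp
    by_contra hc
    have : p ∈ A' \ T := Finset.mem_sdiff.mpr ⟨hp, hc⟩
    simp [h0] at this
  -- T = A ∪ A'
  have hTeq : T = A ∪ A' := by
    refine (Finset.eq_of_subset_of_card_le (Finset.union_subset hAT hA'T) ?_).symm
    rw [Finset.card_union_of_disjoint hdisj, hA, hA']
    omega
  -- diffSet β π = A'
  have hDβπ : diffSet β π = A' := by
    have hTA'sub : A' ⊆ T \ A := by
      intro p hp
      exact sub2 (Finset.mem_inter.mpr ⟨hA'T hp, hp⟩)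
    have h1 : A' ⊆ diffSet β π := fun p hp =>
      hsub1 (Finset.mem_union_left _ (hTA'sub hp))
    exact (Finset.eq_of_subset_of_card_le h1 (by rw [hβπ, hA'])).symm
  have hDβπ' : diffSet β π' = A := by
    have hTAsub : A ⊆ T \ A' := by
      intro p hp
      exact sub2' (Finset.mem_inter.mpr ⟨hAT hp, hp⟩)
    have h1 : A ⊆ diffSet β π' := fun p hp =>
      hsub1' (Finset.mem_union_left _ (hTAsub hp))
    exact (Finset.eq_of_subset_of_card_le h1 (by rw [hβπ', hA])).symm
  -- pointwise conclusion
  funext p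
  by_cases hp : α p = π p
  · simp only [hp, if_true]
    by_cases hp' : α p = π' p
    · -- p ∉ A, p ∉ A', so p ∉ T, so β p = α p = π' p
      have hpT : p ∉ T := by
        rw [hTeq]
        simp only [Finset.mem_union, hAdef, hA'def, mem_diffSet, ne_eq, not_or, not_not]
        exact ⟨hp, hp'⟩
      rw [hT, mem_diffSet, not_not] at hpT
      exact hpT.symm.trans hp'
    ·
      -- diffSet β π' = A, p ∉ A (disjoint), so β p = π' p
      have hpA' : p ∈ A' := by rw [hA'def, mem_diffSet]; exact hp'
      have hpnA : p ∉ A := fun hc => (Finset.disjoint_left.mp hdisj hc) hpA'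
      have : p ∉ diffSet β π' := by rw [hDβπ']; exact hpnA
      rw [mem_diffSet, not_not] at this
      exact this
  · simp only [hp, if_false]
    have hpA : p ∈ A := by rw [hAdef, mem_diffSet]; exact hp
    have hpnA' : p ∉ A' := fun hc => (Finset.disjoint_left.mp hdisj hpA) hc
    have : p ∉ diffSet β π := by rw [hDβπ]; exact hpnA'
    rw [mem_diffSet, not_not] at this
    exact this

end Aux

/-- For an elusive triple with minimum distance `δ ≥ 3` and associates
`π, π'` with `d(π,π') = 4`, we have `1 ≤ MC(π,π') ≤ 2`. -/
theorem stmt_5 (m q : ℕ) (C : Set (Fin m → Fin q)) (α : Fin m → Fin q)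
    (x : (Fin m → Fin q) ≃ (Fin m → Fin q))
    (hET : IsElusiveTriple C α x) (hδ : ∃ δ : ℕ, 3 ≤ δ ∧ HasMinDist C δ)
    (π π' : Fin m → Fin q)
    (hπ : IsAssociate C α x π) (hπ' : IsAssociate C α x π')
    (hd : hammingDist π π' = 4) :
    1 ≤ MC C π π' ∧ MC C π π' ≤ 2 := by
  classical
  obtain ⟨δ, h3δ, hmin⟩ := hδ
  have hαC : α ∈ C := hET.2.2.1
  have hπg : π ∈ GammaSet α 2 := hπ.1
  have hπ'g : π' ∈ GammaSet α 2 := hπ'.1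
  have hαπ : hammingDist α π = 2 := hπg
  have hαπ' : hammingDist α π' = 2 := hπ'g
  have hA : (diffSet α π).card = 2 := hαπ
  have hA' : (diffSet α π').card = 2 := hαπ'
  have hdisj : Disjoint (diffSet α π) (diffSet α π') := by
    have hsub : diffSet π π' ⊆ diffSet α π ∪ diffSet α π' := by
      intro p hp
      rw [mem_diffSet] at hp
      by_contra hc
      simp only [Finset.mem_union, mem_diffSet, ne_eq, not_or, not_not] at hc
      exact hp (hc.1.symm.trans hc.2)
    have h4 : (diffSet π π').card = 4 := hd
    have hle := Finset.card_le_card hsub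
    have hun := Finset.card_union_le (diffSet α π) (diffSet α π')
    have hcard := Finset.card_union_add_card_inter (diffSet α π) (diffSet α π')
    rw [Finset.disjoint_iff_inter_eq_empty, ← Finset.card_eq_zero]
    omega
  set S := C ∩ GammaSet π 2 ∩ GammaSet π' 2 with hS
  have hαS : α ∈ S := by
    refine ⟨⟨hαC, ?_⟩, ?_⟩ <;>
      simp only [GammaSet, Set.mem_setOf_eq, hammingDist_comm] <;> assumption
  constructor
  · have : 0 < S.ncard := (Set.ncard_pos (Set.toFinite _)).mpr ⟨α, hαS⟩
    exact this
  · set β₀ : Fin m → Fin q := fun p => if α p = π p then π' p else π p with hβ₀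
    have hsub : S ⊆ {α, β₀} := by
      rintro β ⟨⟨hβC, hβπ⟩, hβπ'⟩
      by_cases hβα : β = α
      · exact Or.inl hβα
      · right
        have hβπ2 : (diffSet β π).card = 2 := by
          rw [diffSet_comm]; exact hβπ
        have hβπ'2 : (diffSet β π').card = 2 := by
          rw [diffSet_comm]; exact hβπ'
        have hT3 : 3 ≤ (diffSet α β).card := by
          have := hmin.2 ⟨α, hαC, β, hβC, fun h => hβα h.symm, rfl⟩
          calc 3 ≤ δ := h3δ
          _ ≤ hammingDist α β := this
        have hT4 : (diffSet α β).card ≤ 4 := by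
          have := hammingDist_triangle α π β
          have h2 : hammingDist π β = 2 := hβπ
          show hammingDist α β ≤ 4
          omega
        exact key hA hA' hdisj hβπ2 hβπ'2 hT3 hT4
    calc MC C π π' = S.ncard := rfl
    _ ≤ ({α, β₀} : Set (Fin m → Fin q)).ncard := Set.ncard_le_ncard hsub (Set.toFinite _)
    _ ≤ ({β₀} : Set (Fin m → Fin q)).ncard + 1 := Set.ncard_insert_le _ _
    _ ≤ 2 := by rw [Set.ncard_singleton]
end

section
/- Suppose q ≥ 3 and α, β are vertices of the Hamming graph H(m,q) with d(α,β) = 3. Then Γ_2(α) ∩ Γ_2(β) = { γ(α|i,j|a,β_j) : i, j ∈ diff(α,β), i ≠ j, a ≠ α_i and a ≠ β_i }, and this set has size 6(q−2). -/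
variable {M Q : Type*}

section StmtSixAux

variable {m q : ℕ}

lemma mem_diffSet' {α β : Fin m → Fin q} {i : Fin m} :
    i ∈ diffSet α β ↔ α i ≠ β i := by simp [diffSet]

lemma hd_eq_card (α β : Fin m → Fin q) : hammingDist α β = (diffSet α β).card := rfl

lemma u2_right (α : Fin m → Fin q) (i j : Fin m) (a b : Fin q) :
    update2 α i j a b j = b := by simp [update2]

lemma u2_left {i j : Fin m} (α : Fin m → Fin q) (hij : i ≠ j) (a b : Fin q) :
    update2 α i j a b i = a := by
  simp [update2, Function.update_of_ne hij]

lemma u2_other {i j p : Fin m} (α : Fin m → Fin q) (hpi : p ≠ i) (hpj : p ≠ j)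
    (a b : Fin q) : update2 α i j a b p = α p := by
  simp [update2, Function.update_of_ne hpj, Function.update_of_ne hpi]

lemma gamma_mem {α γ : Fin m → Fin q} {r : ℕ} :
    γ ∈ GammaSet α r ↔ (diffSet α γ).card = r := Iff.rfl

/-- The forward (hard) direction of stmt 6. -/
lemma stmt6_subset {α β γ : Fin m → Fin q} (h : (diffSet α β).card = 3)
    (h1 : (diffSet α γ).card = 2) (h2 : (diffSet β γ).card = 2) :
    ∃ i ∈ diffSet α β, ∃ j ∈ diffSet α β, i ≠ j ∧
      ∃ a : Fin q, a ≠ α i ∧ a ≠ β i ∧ γ = update2 α i j a (β j) := by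
  classical
  set A := diffSet α γ with hAdef
  set B := diffSet β γ with hBdef
  set D := diffSet α β with hDdef
  have hDsub : D ⊆ A ∪ B := by
    intro p hp
    rw [hDdef, mem_diffSet'] at hp
    by_contra hc
    simp only [Finset.mem_union, not_or, hAdef, hBdef, mem_diffSet', not_not] at hc
    exact hp (hc.1.trans hc.2.symm)
  have hsdiff : ∀ p, p ∉ D → (p ∈ A ↔ p ∈ B) := by
    intro p hp
    rw [hDdef, mem_diffSet', not_not] at hp
    simp [hAdef, hBdef, mem_diffSet', hp]
  have hABne : (A ∩ B).Nonempty := by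
    by_contra hne
    rw [Finset.not_nonempty_iff_eq_empty] at hne
    have hAD : A ⊆ D := by
      intro p hp
      by_contra hpD
      have hpB := (hsdiff p hpD).mp hp
      have : p ∈ A ∩ B := Finset.mem_inter.mpr ⟨hp, hpB⟩
      simp [hne] at this
    have hBD : B ⊆ D := by
      intro p hp
      by_contra hpD
      have hpA := (hsdiff p hpD).mpr hp
      have : p ∈ A ∩ B := Finset.mem_inter.mpr ⟨hpA, hp⟩
      simp [hne] at this
    have hDe : D = A ∪ B := subset_antisymm hDsub (Finset.union_subset hAD hBD)
    have hdisj : Disjoint A B := Finset.disjoint_iff_inter_eq_empty.mpr hne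
    rw [hDe, Finset.card_union_of_disjoint hdisj, h1, h2] at h
    omega
  obtain ⟨i, hi⟩ := hABne
  have hiA : i ∈ A := (Finset.mem_inter.mp hi).1
  have hiB : i ∈ B := (Finset.mem_inter.mp hi).2
  have hcui : (A ∪ B).card + (A ∩ B).card = A.card + B.card :=
    Finset.card_union_add_card_inter A B
  have hip : 1 ≤ (A ∩ B).card := Finset.card_pos.mpr ⟨i, hi⟩
  have hDeq : D = A ∪ B :=
    Finset.eq_of_subset_of_card_le hDsub (by omega)
  have hIone : (A ∩ B).card = 1 := by
    rw [hDeq] at h; omega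
  have hIeq : A ∩ B = {i} := by
    obtain ⟨x, hx⟩ := Finset.card_eq_one.mp hIone
    rw [hx] at hi ⊢
    simp only [Finset.mem_singleton] at hi
    rw [hi]
  obtain ⟨x, y, hxy, hAe⟩ := Finset.card_eq_two.mp h1
  have hiA' : i = x ∨ i = y := by
    rw [hAe] at hiA; simpa using hiA
  obtain ⟨j, hji, hAmem⟩ : ∃ j, j ≠ i ∧ ∀ p, p ∈ A ↔ p = i ∨ p = j := by
    rcases hiA' with rfl | rfl
    · exact ⟨y, fun hc => hxy hc.symm, by intro p; rw [hAe]; simp⟩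
    · exact ⟨x, fun hc => hxy hc, by intro p; rw [hAe]; simp; tauto⟩
  have hjA : j ∈ A := (hAmem j).mpr (Or.inr rfl)
  have hjB : j ∉ B := by
    intro hc
    have : j ∈ A ∩ B := Finset.mem_inter.mpr ⟨hjA, hc⟩
    rw [hIeq] at this
    exact hji (Finset.mem_singleton.mp this)
  have hiD : i ∈ D := by rw [hDeq]; exact Finset.mem_union_left _ hiA
  have hjD : j ∈ D := by rw [hDeq]; exact Finset.mem_union_left _ hjA
  refine ⟨i, hiD, j, hjD, fun hc => hji hc.symm, γ i, ?_, ?_, ?_⟩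
  · rw [hAdef, mem_diffSet'] at hiA; exact fun hc => hiA hc.symm
  · rw [hBdef, mem_diffSet'] at hiB; exact fun hc => hiB hc.symm
  · funext p
    by_cases hpj : p = j
    · subst hpj
      rw [u2_right]
      rw [hBdef, mem_diffSet', not_not] at hjB
      exact hjB.symm
    · by_cases hpi : p = i
      · subst hpi
        rw [u2_left α (fun hc => hji hc.symm)]
      · rw [u2_other α hpi hpj]
        have hpA : p ∉ A := by
          rw [hAmem p]; tauto
        rw [hAdef, mem_diffSet', not_not] at hpA
        exact hpA.symm

lemma stmt6_diff1 {α β : Fin m → Fin q} {i j : Fin m} {a : Fin q}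
    (hjD : j ∈ diffSet α β) (hij : i ≠ j) (ha1 : a ≠ α i) :
    diffSet α (update2 α i j a (β j)) = {i, j} := by
  ext p
  rw [mem_diffSet']
  by_cases hpj : p = j
  · subst hpj
    rw [u2_right]
    rw [mem_diffSet'] at hjD
    simp [hjD]
  · by_cases hpi : p = i
    · subst hpi
      rw [u2_left α hij]
      simp only [Finset.mem_insert, Finset.mem_singleton, true_or, iff_true]
      exact fun hc => ha1 hc.symm
    · rw [u2_other α hpi hpj]
      simp [hpi, hpj]

lemma stmt6_diff2 {α β : Fin m → Fin q} {i j : Fin m} {a : Fin q}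
    (hiD : i ∈ diffSet α β) (hjD : j ∈ diffSet α β) (hij : i ≠ j) (ha2 : a ≠ β i) :
    diffSet β (update2 α i j a (β j)) =
      insert i (((diffSet α β).erase i).erase j) := by
  ext p
  rw [mem_diffSet']
  by_cases hpj : p = j
  · subst hpj
    rw [u2_right]
    simp [hij, Ne.symm hij]
  · by_cases hpi : p = i
    · subst hpi
      rw [u2_left α hij]
      simp only [Finset.mem_insert, Finset.mem_erase, true_or, iff_true]
      exact fun hc => ha2 hc.symm
    · rw [u2_other α hpi hpj]
      simp only [Finset.mem_insert, Finset.mem_erase, mem_diffSet', hpi, hpj,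
        false_or, ne_eq, not_false_eq_true, true_and]
      constructor
      · intro hc hc2; exact hc hc2.symm
      · intro hc hc2; exact hc hc2.symm

end StmtSixAux

/-- If `q ≥ 3` and `d(α,β) = 3`, then `Γ₂(α) ∩ Γ₂(β)` consists exactly of
the vertices `γ(α|i,j|a,β_j)` with `i, j ∈ diff(α,β)` distinct and `a ≠ α_i, β_i`,
and this set has size `6(q-2)`. -/
theorem stmt_6 (m q : ℕ) (hq : 3 ≤ q) (α β : Fin m → Fin q)
    (h : hammingDist α β = 3) :
    GammaSet α 2 ∩ GammaSet β 2 =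
      {γ | ∃ i ∈ diffSet α β, ∃ j ∈ diffSet α β, i ≠ j ∧
        ∃ a : Fin q, a ≠ α i ∧ a ≠ β i ∧ γ = update2 α i j a (β j)} ∧
    (GammaSet α 2 ∩ GammaSet β 2).ncard = 6 * (q - 2) := by
  classical
  have hD : (diffSet α β).card = 3 := h
  set D := diffSet α β with hDdef
  have hset : GammaSet α 2 ∩ GammaSet β 2 =
      {γ | ∃ i ∈ D, ∃ j ∈ D, i ≠ j ∧
        ∃ a : Fin q, a ≠ α i ∧ a ≠ β i ∧ γ = update2 α i j a (β j)} := by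
    ext γ
    constructor
    · rintro ⟨h1, h2⟩
      exact stmt6_subset hD h1 h2
    · rintro ⟨i, hiD, j, hjD, hij, a, ha1, ha2, rfl⟩
      constructor
      · show (diffSet α _).card = 2
        rw [stmt6_diff1 hjD hij ha1,
          Finset.card_insert_of_notMem (by simp [hij]), Finset.card_singleton]
      · show (diffSet β _).card = 2
        rw [stmt6_diff2 hiD hjD hij ha2]
        have hnotmem : i ∉ (D.erase i).erase j := by simp
        rw [Finset.card_insert_of_notMem hnotmem,
          Finset.card_erase_of_mem (Finset.mem_erase.mpr ⟨Ne.symm hij, hjD⟩),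
          Finset.card_erase_of_mem hiD, hD]
  refine ⟨hset, ?_⟩
  rw [hset]
  set f : (Fin m × Fin m) × Fin q → (Fin m → Fin q) :=
    fun t => update2 α t.1.1 t.1.2 t.2 (β t.1.2) with hfdef
  set F : Finset ((Fin m × Fin m) × Fin q) :=
    (D.offDiag ×ˢ Finset.univ).filter (fun t => t.2 ≠ α t.1.1 ∧ t.2 ≠ β t.1.1) with hFdef
  have hmemF : ∀ t, t ∈ F ↔ t.1.1 ∈ D ∧ t.1.2 ∈ D ∧ t.1.1 ≠ t.1.2 ∧
      t.2 ≠ α t.1.1 ∧ t.2 ≠ β t.1.1 := by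
    intro t
    simp [hFdef, Finset.mem_filter, Finset.mem_product, Finset.mem_offDiag, and_assoc]
  have himg : {γ | ∃ i ∈ D, ∃ j ∈ D, i ≠ j ∧
      ∃ a : Fin q, a ≠ α i ∧ a ≠ β i ∧ γ = update2 α i j a (β j)} = ↑(F.image f) := by
    ext γ
    simp only [Set.mem_setOf_eq, Finset.coe_image, Set.mem_image, Finset.mem_coe]
    constructor
    · rintro ⟨i, hiD, j, hjD, hij, a, ha1, ha2, rfl⟩
      exact ⟨((i, j), a), (hmemF _).mpr ⟨hiD, hjD, hij, ha1, ha2⟩, rfl⟩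
    · rintro ⟨⟨⟨i, j⟩, a⟩, ht, rfl⟩
      obtain ⟨hiD, hjD, hij, ha1, ha2⟩ := (hmemF _).mp ht
      exact ⟨i, hiD, j, hjD, hij, a, ha1, ha2, rfl⟩
  rw [himg, Set.ncard_coe_finset]
  have hinj : Set.InjOn f ↑F := by
    rintro ⟨⟨i, j⟩, a⟩ ht ⟨⟨i', j'⟩, a'⟩ ht' heq
    rw [Finset.mem_coe] at ht ht'
    obtain ⟨hiD, hjD, hij, ha1, ha2⟩ := (hmemF _).mp ht
    obtain ⟨hiD', hjD', hij', ha1', ha2'⟩ := (hmemF _).mp ht'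
    simp only [hfdef] at heq
    have hii : i = i' := by
      by_contra hii
      have hv := congrFun heq i'
      rw [u2_left α hij'] at hv
      by_cases hc : i' = j
      · subst hc; rw [u2_right] at hv; exact ha2' hv.symm
      · rw [u2_other α (fun hc2 => hii hc2.symm) hc] at hv
        exact ha1' hv.symm
    subst hii
    have hjj : j = j' := by
      by_contra hjj
      have hv := congrFun heq j'
      rw [u2_right] at hv
      rw [u2_other α (fun hc => hij' hc.symm) (fun hc => hjj hc.symm)] at hv
      rw [mem_diffSet'] at hjD'
      exact hjD' hv
    subst hjj
    have hv := congrFun heq i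
    rw [u2_left α hij, u2_left α hij] at hv
    rw [hv]
  rw [Finset.card_image_of_injOn hinj]
  have hFb : F = D.offDiag.biUnion (fun p => ({p} : Finset (Fin m × Fin m)) ×ˢ
      (Finset.univ.filter fun x : Fin q => x ≠ α p.1 ∧ x ≠ β p.1)) := by
    ext t
    rw [hmemF]
    simp only [Finset.mem_biUnion, Finset.mem_product, Finset.mem_singleton,
      Finset.mem_offDiag, Finset.mem_filter, Finset.mem_univ, true_and]
    constructor
    · rintro ⟨h1, h2, h3, h4, h5⟩
      exact ⟨t.1, ⟨h1, h2, h3⟩, rfl, h4, h5⟩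
    · rintro ⟨p, ⟨h1, h2, h3⟩, heq, h4, h5⟩
      subst heq
      exact ⟨h1, h2, h3, h4, h5⟩
  have hdisj : ∀ p ∈ D.offDiag, ∀ p' ∈ D.offDiag, p ≠ p' →
      Disjoint (({p} : Finset (Fin m × Fin m)) ×ˢ
        (Finset.univ.filter fun x : Fin q => x ≠ α p.1 ∧ x ≠ β p.1))
        (({p'} : Finset (Fin m × Fin m)) ×ˢ
        (Finset.univ.filter fun x : Fin q => x ≠ α p'.1 ∧ x ≠ β p'.1)) := by
    intro p _ p' _ hpp'
    rw [Finset.disjoint_left]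
    intro t ht ht'
    rw [Finset.mem_product, Finset.mem_singleton] at ht ht'
    exact hpp' (ht.1 ▸ ht'.1)
  have hcards : ∀ p ∈ D.offDiag, (({p} : Finset (Fin m × Fin m)) ×ˢ
      (Finset.univ.filter fun x : Fin q => x ≠ α p.1 ∧ x ≠ β p.1)).card = q - 2 := by
    intro p hp
    rw [Finset.mem_offDiag] at hp
    have hne : α p.1 ≠ β p.1 := mem_diffSet'.mp hp.1
    rw [Finset.card_product, Finset.card_singleton, one_mul]
    have hflt : (Finset.univ.filter fun x : Fin q => x ≠ α p.1 ∧ x ≠ β p.1) =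
        Finset.univ \ {α p.1, β p.1} := by
      ext x
      simp
    rw [hflt, Finset.card_sdiff_of_subset (Finset.subset_univ _),
      Finset.card_insert_of_notMem (by simpa using hne), Finset.card_singleton,
      Finset.card_univ, Fintype.card_fin]
  rw [hFb, Finset.card_biUnion hdisj, Finset.sum_congr rfl hcards, Finset.sum_const,
    Finset.offDiag_card, hD]
  simp [smul_eq_mul]
end

section
/- Let (C,α,x) be an elusive triple in H(m,q) with q ≥ 3, where C has minimum distance δ = 3, and let π, π' be (C,α,x)-associates with d(π,π') = 3. Then 1 ≤ MC(π,π') ≤ 3. Moreover, if MC(π,π') = 3 and diff(α,π) = {i,j}, diff(α,π') = {j,k}, then C ∩ Γ_2(π) ∩ Γ_2(π') = { α, γ(α|i,j,k|π_i,π'_j,a), γ(α|i,j,k|c,π_j,π'_k) } for some a with a ≠ α_k and a ≠ π'_k, and some c with c ≠ α_i and c ≠ π_i. -/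
variable {M Q : Type*}

section Stmt7Aux

lemma stmt7_hd_filter {m q : ℕ} (β γ : Fin m → Fin q) :
    hammingDist β γ = (Finset.univ.filter fun l => β l ≠ γ l).card := rfl

lemma stmt7_card_triple {n : ℕ} {i j k : Fin n} (hij : i ≠ j) (hik : i ≠ k) (hjk : j ≠ k)
    (p : Fin n → Prop) [DecidablePred p] (h : ∀ l, p l → l = i ∨ l = j ∨ l = k) :
    (Finset.univ.filter p).card =
      (if p i then 1 else 0) + (if p j then 1 else 0) + (if p k then 1 else 0) := by
  have he : Finset.univ.filter p = ({i, j, k} : Finset (Fin n)).filter p := by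
    ext l
    simp only [Finset.mem_filter, Finset.mem_univ, true_and, Finset.mem_insert,
      Finset.mem_singleton]
    exact ⟨fun hp => ⟨h l hp, hp⟩, fun h => h.2⟩
  rw [he, show ({i, j, k} : Finset (Fin n)) = insert i (insert j {k}) from rfl,
    Finset.filter_insert, Finset.filter_insert, Finset.filter_singleton]
  split_ifs <;>
    simp_all [Finset.card_insert_of_notMem, hij, hik, hjk]

lemma stmt7_u3_i {M Q : Type*} [DecidableEq M] (α : M → Q) {i j k : M} (a b c : Q)
    (hij : i ≠ j) (hik : i ≠ k) : update3 α i j k a b c i = a := by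
  simp [update3, Function.update_of_ne hik, Function.update_of_ne hij]

lemma stmt7_u3_j {M Q : Type*} [DecidableEq M] (α : M → Q) {i j k : M} (a b c : Q)
    (hjk : j ≠ k) : update3 α i j k a b c j = b := by
  simp [update3, Function.update_of_ne hjk]

lemma stmt7_u3_k {M Q : Type*} [DecidableEq M] (α : M → Q) {i j k : M} (a b c : Q) :
    update3 α i j k a b c k = c := by
  simp [update3]

lemma stmt7_u3_other {M Q : Type*} [DecidableEq M] (α : M → Q) {i j k l : M} (a b c : Q)
    (hi : l ≠ i) (hj : l ≠ j) (hk : l ≠ k) : update3 α i j k a b c l = α l := by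
  simp [update3, Function.update_of_ne hi, Function.update_of_ne hj, Function.update_of_ne hk]


lemma stmt7_two_of_three {P Q R : Prop} [Decidable P] [Decidable Q] [Decidable R]
    (h : (if P then 1 else 0) + (if Q then 1 else 0) + (if R then 1 else 0) = 2) :
    (¬P ∧ Q ∧ R) ∨ (P ∧ ¬Q ∧ R) ∨ (P ∧ Q ∧ ¬R) := by
  split_ifs at h <;> first | tauto | omega

lemma stmt7_three_of_three {P Q R : Prop} [Decidable P] [Decidable Q] [Decidable R]
    (h : 3 ≤ (if P then 1 else 0) + (if Q then 1 else 0) + (if R then 1 else 0)) :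
    P ∧ Q ∧ R := by
  split_ifs at h <;> first | tauto | omega

lemma stmt7_main {m q : ℕ} (C : Set (Fin m → Fin q)) (α π π' : Fin m → Fin q)
    (hαC : α ∈ C)
    (hmin : ∀ β ∈ C, ∀ γ ∈ C, β ≠ γ → 3 ≤ hammingDist β γ)
    (h2 : hammingDist α π = 2) (h2' : hammingDist α π' = 2)
    (hd : hammingDist π π' = 3) (i j k : Fin m)
    (hD1 : diffSet α π = {i, j}) (hD2 : diffSet α π' = {j, k}) :
    i ≠ j ∧ i ≠ k ∧ j ≠ k ∧ α i ≠ π i ∧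
    (C ∩ GammaSet π 2 ∩ GammaSet π' 2 = {α} ∨
     (∃ β : Fin m → Fin q, β ≠ α ∧ C ∩ GammaSet π 2 ∩ GammaSet π' 2 = {α, β}) ∨
     (∃ a c : Fin q, a ≠ α k ∧ a ≠ π' k ∧ c ≠ α i ∧ c ≠ π i ∧
       C ∩ GammaSet π 2 ∩ GammaSet π' 2 =
         {α, update3 α i j k (π i) (π' j) a, update3 α i j k c (π j) (π' k)})) := by
  have hc1 : ({i, j} : Finset (Fin m)).card = 2 := by rw [← hD1]; exact h2
  have hc2 : ({j, k} : Finset (Fin m)).card = 2 := by rw [← hD2]; exact h2'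
  have hij : i ≠ j := by rintro rfl; simp at hc1
  have hjk : j ≠ k := by rintro rfl; simp at hc2
  have hπi : α i ≠ π i := by
    have : i ∈ diffSet α π := by rw [hD1]; simp
    simpa [diffSet] using this
  have hπj : α j ≠ π j := by
    have : j ∈ diffSet α π := by rw [hD1]; simp
    simpa [diffSet] using this
  have hπ'j : α j ≠ π' j := by
    have : j ∈ diffSet α π' := by rw [hD2]; simp
    simpa [diffSet] using this
  have hπ'k : α k ≠ π' k := by
    have : k ∈ diffSet α π' := by rw [hD2]; simp
    simpa [diffSet] using this
  have hπoff : ∀ l, l ≠ i → l ≠ j → π l = α l := by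
    intro l h1 h2
    by_contra hne
    have : l ∈ diffSet α π := by simp [diffSet]; exact fun e => hne e.symm
    rw [hD1] at this
    simp at this
    tauto
  have hπ'off : ∀ l, l ≠ j → l ≠ k → π' l = α l := by
    intro l h1 h2
    by_contra hne
    have : l ∈ diffSet α π' := by simp [diffSet]; exact fun e => hne e.symm
    rw [hD2] at this
    simp at this
    tauto
  have hdcard : (diffSet π π').card = 3 := hd
  have hik : i ≠ k := by
    rintro rfl
    have hsub : diffSet π π' ⊆ {i, j} := by
      intro l hl
      simp only [diffSet, Finset.mem_filter, Finset.mem_univ, true_and] at hl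
      simp only [Finset.mem_insert, Finset.mem_singleton]
      by_contra hcon
      push_neg at hcon
      exact hl ((hπoff l hcon.1 hcon.2).trans (hπ'off l hcon.2 hcon.1).symm)
    have := Finset.card_le_card hsub
    rw [hdcard, hc1] at this
    omega
  have hsub3 : diffSet π π' ⊆ {i, j, k} := by
    intro l hl
    simp only [diffSet, Finset.mem_filter, Finset.mem_univ, true_and] at hl
    simp only [Finset.mem_insert, Finset.mem_singleton]
    by_contra hcon
    push_neg at hcon
    exact hl ((hπoff l hcon.1 hcon.2.1).trans (hπ'off l hcon.2.1 hcon.2.2).symm)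
  have hc3 : ({i, j, k} : Finset (Fin m)).card = 3 := by
    rw [Finset.card_insert_of_notMem (by simp [hij, hik]),
      Finset.card_insert_of_notMem (by simp [hjk]), Finset.card_singleton]
  have hD3 : diffSet π π' = {i, j, k} :=
    Finset.eq_of_subset_of_card_le hsub3 (by rw [hdcard, hc3])
  have hππ'j : π j ≠ π' j := by
    have : j ∈ diffSet π π' := by rw [hD3]; simp
    simpa [diffSet] using this
  have hπ'i : π' i = α i := hπ'off i hij hik
  have hπk : π k = α k := hπoff k (Ne.symm hik) (Ne.symm hjk)
  -- support lemma
  have hsupp : ∀ β : Fin m → Fin q, hammingDist π β = 2 → hammingDist π' β = 2 →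
      ∀ l, l ≠ i → l ≠ j → l ≠ k → β l = α l := by
    intro β hb hb' l hli hlj hlk
    by_contra hne
    have hScard : (diffSet β π).card = 2 := by
      rw [show (diffSet β π).card = hammingDist β π from rfl, hammingDist_comm]; exact hb
    have hTcard : (diffSet β π').card = 2 := by
      rw [show (diffSet β π').card = hammingDist β π' from rfl, hammingDist_comm]; exact hb'
    have hlS : l ∈ diffSet β π := by
      simp only [diffSet, Finset.mem_filter, Finset.mem_univ, true_and, hπoff l hli hlj]
      exact hne
    have hlT : l ∈ diffSet β π' := by
      simp only [diffSet, Finset.mem_filter, Finset.mem_univ, true_and, hπ'off l hlj hlk]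
      exact hne
    have hmemU : ∀ t : Fin m, π t ≠ π' t → t ∈ diffSet β π ∪ diffSet β π' := by
      intro t ht
      rw [Finset.mem_union]
      by_contra hcon
      push_neg at hcon
      simp only [diffSet, Finset.mem_filter, Finset.mem_univ, true_and, not_not] at hcon
      exact ht (hcon.1 ▸ hcon.2 ▸ rfl)
    have hiU : i ∈ diffSet β π ∪ diffSet β π' := hmemU i (by rw [hπ'i]; exact fun e => hπi e.symm)
    have hjU : j ∈ diffSet β π ∪ diffSet β π' := hmemU j hππ'j
    have hkU : k ∈ diffSet β π ∪ diffSet β π' := hmemU k (by rw [hπk]; exact hπ'k)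
    have hsub4 : ({l, i, j, k} : Finset (Fin m)) ⊆ diffSet β π ∪ diffSet β π' := by
      intro t ht
      simp only [Finset.mem_insert, Finset.mem_singleton] at ht
      rcases ht with rfl | rfl | rfl | rfl
      · exact Finset.mem_union_left _ hlS
      · exact hiU
      · exact hjU
      · exact hkU
    have hc4 : ({l, i, j, k} : Finset (Fin m)).card = 4 := by
      rw [Finset.card_insert_of_notMem (by simp [hli, hlj, hlk]),
        Finset.card_insert_of_notMem (by simp [hij, hik]),
        Finset.card_insert_of_notMem (by simp [hjk]), Finset.card_singleton]
    have h4le := Finset.card_le_card hsub4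
    have hui := Finset.card_union_add_card_inter (diffSet β π) (diffSet β π')
    have h1le : 1 ≤ (diffSet β π ∩ diffSet β π').card :=
      Finset.card_pos.mpr ⟨l, Finset.mem_inter.mpr ⟨hlS, hlT⟩⟩
    rw [hc4] at h4le
    omega
  -- classification
  have hclass : ∀ β ∈ C ∩ GammaSet π 2 ∩ GammaSet π' 2, β = α ∨
      ((β i = π i ∧ β j = π' j ∧ β k ≠ α k ∧ β k ≠ π' k) ∨
       (β i = π i ∧ β j ≠ α j ∧ β j ≠ π j ∧ β j ≠ π' j ∧ β k = π' k) ∨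
       (β i ≠ α i ∧ β i ≠ π i ∧ β j = π j ∧ β k = π' k)) := by
    rintro β ⟨⟨hβC, hβπ⟩, hβπ'⟩
    by_cases hβα : β = α
    · exact Or.inl hβα
    right
    have hs := hsupp β hβπ hβπ'
    have hA : (if β i ≠ π i then 1 else 0) + (if β j ≠ π j then 1 else 0) +
        (if β k ≠ π k then 1 else 0) = 2 := by
      rw [← stmt7_card_triple hij hik hjk (fun l => β l ≠ π l) (fun l hl => by
        by_contra hcon; push_neg at hcon
        exact hl ((hs l hcon.1 hcon.2.1 hcon.2.2).trans (hπoff l hcon.1 hcon.2.1).symm))]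
      rw [← stmt7_hd_filter, hammingDist_comm]
      exact hβπ
    have hB : (if β i ≠ π' i then 1 else 0) + (if β j ≠ π' j then 1 else 0) +
        (if β k ≠ π' k then 1 else 0) = 2 := by
      rw [← stmt7_card_triple hij hik hjk (fun l => β l ≠ π' l) (fun l hl => by
        by_contra hcon; push_neg at hcon
        exact hl ((hs l hcon.1 hcon.2.1 hcon.2.2).trans (hπ'off l hcon.2.1 hcon.2.2).symm))]
      rw [← stmt7_hd_filter, hammingDist_comm]
      exact hβπ'
    have hD : 3 ≤ (if β i ≠ α i then 1 else 0) + (if β j ≠ α j then 1 else 0) +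
        (if β k ≠ α k then 1 else 0) := by
      rw [← stmt7_card_triple hij hik hjk (fun l => β l ≠ α l) (fun l hl => by
        by_contra hcon; push_neg at hcon
        exact hl (hs l hcon.1 hcon.2.1 hcon.2.2))]
      rw [← stmt7_hd_filter]
      exact hmin β hβC α hαC hβα
    obtain ⟨hDi, hDj, hDk⟩ := stmt7_three_of_three hD
    have hkπ : β k ≠ π k := by rw [hπk]; exact hDk
    have hiπ' : β i ≠ π' i := by rw [hπ'i]; exact hDi
    have hBcases : (β j = π' j ∧ β k ≠ π' k) ∨ (β j ≠ π' j ∧ β k = π' k) := by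
      rcases stmt7_two_of_three hB with ⟨h1, _, _⟩ | ⟨_, h2, h3⟩ | ⟨_, h2, h3⟩
      · exact absurd hiπ' h1
      · exact Or.inl ⟨not_not.mp h2, h3⟩
      · exact Or.inr ⟨h2, not_not.mp h3⟩
    rcases stmt7_two_of_three hA with ⟨h1, h2, _⟩ | ⟨h1, h2, _⟩ | ⟨_, _, h3⟩
    · -- β i = π i, β j ≠ π j
      rcases hBcases with ⟨hb1, hb2⟩ | ⟨hb1, hb2⟩
      · exact Or.inl ⟨not_not.mp h1, hb1, hDk, hb2⟩
      · exact Or.inr (Or.inl ⟨not_not.mp h1, hDj, h2, hb1, hb2⟩)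
    · -- β j = π j, β i ≠ π i
      have hjne : β j ≠ π' j := by rw [not_not.mp h2]; exact hππ'j
      rcases hBcases with ⟨hb1, _⟩ | ⟨_, hb2⟩
      · exact absurd hb1 hjne
      · exact Or.inr (Or.inr ⟨hDi, h1, not_not.mp h2, hb2⟩)
    · exact absurd (not_not.mp h3) hkπ
  have hsuppM : ∀ β ∈ C ∩ GammaSet π 2 ∩ GammaSet π' 2,
      ∀ l, l ≠ i → l ≠ j → l ≠ k → β l = α l := fun β hβ => hsupp β hβ.1.2 hβ.2
  have hdist3 : ∀ β γ : Fin m → Fin q,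
      (∀ l, l ≠ i → l ≠ j → l ≠ k → β l = α l) →
      (∀ l, l ≠ i → l ≠ j → l ≠ k → γ l = α l) →
      hammingDist β γ = (if β i ≠ γ i then 1 else 0) + (if β j ≠ γ j then 1 else 0) +
        (if β k ≠ γ k then 1 else 0) := by
    intro β γ hβ hγ
    rw [stmt7_hd_filter]
    exact stmt7_card_triple hij hik hjk _ (fun l hl => by
      by_contra hcon; push_neg at hcon
      exact hl ((hβ l hcon.1 hcon.2.1 hcon.2.2).trans (hγ l hcon.1 hcon.2.1 hcon.2.2).symm))
  have hsame : ∀ β ∈ C ∩ GammaSet π 2 ∩ GammaSet π' 2,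
      ∀ γ ∈ C ∩ GammaSet π 2 ∩ GammaSet π' 2, hammingDist β γ ≤ 2 → β = γ := by
    intro β hβ γ hγ hle
    by_contra hne
    have := hmin β hβ.1.1 γ hγ.1.1 hne
    omega
  have hαM : α ∈ C ∩ GammaSet π 2 ∩ GammaSet π' 2 := by
    refine ⟨⟨hαC, ?_⟩, ?_⟩
    · show hammingDist π α = 2; rw [hammingDist_comm]; exact h2
    · show hammingDist π' α = 2; rw [hammingDist_comm]; exact h2'
  refine ⟨hij, hik, hjk, hπi, ?_⟩
  by_cases hBex : ∃ β ∈ C ∩ GammaSet π 2 ∩ GammaSet π' 2,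
      β i = π i ∧ β j ≠ α j ∧ β j ≠ π j ∧ β j ≠ π' j ∧ β k = π' k
  · obtain ⟨β, hβM, hβ1, hβ2, hβ3, hβ4, hβ5⟩ := hBex
    refine Or.inr (Or.inl ⟨β, fun e => hβ2 (by rw [e]), ?_⟩)
    ext γ
    constructor
    · intro hγM
      rcases hclass γ hγM with rfl | hA | hB | hC
      · exact Or.inl rfl
      · exfalso
        have hle : hammingDist γ β ≤ 2 := by
          rw [hdist3 γ β (hsuppM γ hγM) (hsuppM β hβM)]
          rw [if_neg (show ¬(γ i ≠ β i) by simp [hA.1, hβ1])]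
          split_ifs <;> omega
        have := hsame γ hγM β hβM hle
        exact hβ4 (by rw [← this, hA.2.1])
      · refine Or.inr ?_
        have hle : hammingDist γ β ≤ 2 := by
          rw [hdist3 γ β (hsuppM γ hγM) (hsuppM β hβM)]
          rw [if_neg (show ¬(γ i ≠ β i) by simp [hB.1, hβ1]),
            if_neg (show ¬(γ k ≠ β k) by simp [hB.2.2.2.2, hβ5])]
          split_ifs <;> omega
        exact hsame γ hγM β hβM hle
      · exfalso
        have hle : hammingDist γ β ≤ 2 := by
          rw [hdist3 γ β (hsuppM γ hγM) (hsuppM β hβM)]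
          rw [if_neg (show ¬(γ k ≠ β k) by simp [hC.2.2.2, hβ5])]
          split_ifs <;> omega
        have := hsame γ hγM β hβM hle
        exact hC.2.1 (by rw [this, hβ1])
    · rintro (rfl | rfl)
      · exact hαM
      · exact hβM
  · by_cases hAex : ∃ β ∈ C ∩ GammaSet π 2 ∩ GammaSet π' 2,
        β i = π i ∧ β j = π' j ∧ β k ≠ α k ∧ β k ≠ π' k
    · obtain ⟨βA, hAM, hA1, hA2, hA3, hA4⟩ := hAex
      have hAe : βA = update3 α i j k (π i) (π' j) (βA k) := by
        funext l
        by_cases li : l = i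
        · subst li; rw [stmt7_u3_i _ _ _ _ hij hik]; exact hA1
        by_cases lj : l = j
        · subst lj; rw [stmt7_u3_j _ _ _ _ hjk]; exact hA2
        by_cases lk : l = k
        · subst lk; rw [stmt7_u3_k]
        · rw [stmt7_u3_other _ _ _ _ li lj lk]; exact hsuppM βA hAM l li lj lk
      by_cases hCex : ∃ β ∈ C ∩ GammaSet π 2 ∩ GammaSet π' 2,
          β i ≠ α i ∧ β i ≠ π i ∧ β j = π j ∧ β k = π' k
      · obtain ⟨βC, hCM, hC1, hC2, hC3, hC4⟩ := hCex
        have hCe : βC = update3 α i j k (βC i) (π j) (π' k) := by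
          funext l
          by_cases li : l = i
          · subst li; rw [stmt7_u3_i _ _ _ _ hij hik]
          by_cases lj : l = j
          · subst lj; rw [stmt7_u3_j _ _ _ _ hjk]; exact hC3
          by_cases lk : l = k
          · subst lk; rw [stmt7_u3_k]; exact hC4
          · rw [stmt7_u3_other _ _ _ _ li lj lk]; exact hsuppM βC hCM l li lj lk
        refine Or.inr (Or.inr ⟨βA k, βC i, hA3, hA4, hC1, hC2, ?_⟩)
        ext γ
        constructor
        · intro hγM
          rcases hclass γ hγM with rfl | hA | hB | hC
          · exact Or.inl rfl
          · refine Or.inr (Or.inl ?_)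
            have hle : hammingDist γ βA ≤ 2 := by
              rw [hdist3 γ βA (hsuppM γ hγM) (hsuppM βA hAM)]
              rw [if_neg (show ¬(γ i ≠ βA i) by simp [hA.1, hA1]),
                if_neg (show ¬(γ j ≠ βA j) by simp [hA.2.1, hA2])]
              split_ifs <;> omega
            rw [← hAe]
            exact hsame γ hγM βA hAM hle
          · exact absurd ⟨γ, hγM, hB⟩ hBex
          · refine Or.inr (Or.inr ?_)
            have hle : hammingDist γ βC ≤ 2 := by
              rw [hdist3 γ βC (hsuppM γ hγM) (hsuppM βC hCM)]
              rw [if_neg (show ¬(γ j ≠ βC j) by simp [hC.2.2.1, hC3]),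
                if_neg (show ¬(γ k ≠ βC k) by simp [hC.2.2.2, hC4])]
              split_ifs <;> omega
            rw [← hCe]
            exact hsame γ hγM βC hCM hle
        · rintro (rfl | rfl | rfl)
          · exact hαM
          · rw [← hAe]; exact hAM
          · rw [← hCe]; exact hCM
      · refine Or.inr (Or.inl ⟨βA, fun e => hA3 (by rw [e]), ?_⟩)
        ext γ
        constructor
        · intro hγM
          rcases hclass γ hγM with rfl | hA | hB | hC
          · exact Or.inl rfl
          · refine Or.inr ?_
            have hle : hammingDist γ βA ≤ 2 := by
              rw [hdist3 γ βA (hsuppM γ hγM) (hsuppM βA hAM)]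
              rw [if_neg (show ¬(γ i ≠ βA i) by simp [hA.1, hA1]),
                if_neg (show ¬(γ j ≠ βA j) by simp [hA.2.1, hA2])]
              split_ifs <;> omega
            exact hsame γ hγM βA hAM hle
          · exact absurd ⟨γ, hγM, hB⟩ hBex
          · exact absurd ⟨γ, hγM, hC⟩ hCex
        · rintro (rfl | rfl)
          · exact hαM
          · exact hAM
    · by_cases hCex : ∃ β ∈ C ∩ GammaSet π 2 ∩ GammaSet π' 2,
          β i ≠ α i ∧ β i ≠ π i ∧ β j = π j ∧ β k = π' k
      · obtain ⟨βC, hCM, hC1, hC2, hC3, hC4⟩ := hCex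
        refine Or.inr (Or.inl ⟨βC, fun e => hC1 (by rw [e]), ?_⟩)
        ext γ
        constructor
        · intro hγM
          rcases hclass γ hγM with rfl | hA | hB | hC
          · exact Or.inl rfl
          · exact absurd ⟨γ, hγM, hA⟩ hAex
          · exact absurd ⟨γ, hγM, hB⟩ hBex
          · refine Or.inr ?_
            have hle : hammingDist γ βC ≤ 2 := by
              rw [hdist3 γ βC (hsuppM γ hγM) (hsuppM βC hCM)]
              rw [if_neg (show ¬(γ j ≠ βC j) by simp [hC.2.2.1, hC3]),
                if_neg (show ¬(γ k ≠ βC k) by simp [hC.2.2.2, hC4])]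
              split_ifs <;> omega
            exact hsame γ hγM βC hCM hle
        · rintro (rfl | rfl)
          · exact hαM
          · exact hCM
      · refine Or.inl ?_
        ext γ
        constructor
        · intro hγM
          rcases hclass γ hγM with rfl | hA | hB | hC
          · exact rfl
          · exact absurd ⟨γ, hγM, hA⟩ hAex
          · exact absurd ⟨γ, hγM, hB⟩ hBex
          · exact absurd ⟨γ, hγM, hC⟩ hCex
        · rintro rfl
          exact hαM

end Stmt7Aux

/-- For an elusive triple with `δ = 3`, `q ≥ 3`, and associates `π, π'` at
distance 3, we have `1 ≤ MC(π,π') ≤ 3`; and if `MC(π,π') = 3` with `diff(α,π) = {i,j}`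
and `diff(α,π') = {j,k}`, then `C ∩ Γ₂(π) ∩ Γ₂(π')` has the stated explicit form. -/
theorem stmt_7 (m q : ℕ) (hq : 3 ≤ q) (C : Set (Fin m → Fin q)) (α : Fin m → Fin q)
    (x : (Fin m → Fin q) ≃ (Fin m → Fin q))
    (hET : IsElusiveTriple C α x) (hδ : HasMinDist C 3)
    (π π' : Fin m → Fin q)
    (hπ : IsAssociate C α x π) (hπ' : IsAssociate C α x π')
    (hd : hammingDist π π' = 3) :
    (1 ≤ MC C π π' ∧ MC C π π' ≤ 3) ∧
    (∀ i j k : Fin m, MC C π π' = 3 →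
      diffSet α π = {i, j} → diffSet α π' = {j, k} →
      ∃ a c : Fin q, a ≠ α k ∧ a ≠ π' k ∧ c ≠ α i ∧ c ≠ π i ∧
        C ∩ GammaSet π 2 ∩ GammaSet π' 2 =
          {α, update3 α i j k (π i) (π' j) a, update3 α i j k c (π j) (π' k)}) := by
  obtain ⟨hAut, hfix, hαC, hxα⟩ := hET
  have hmin : ∀ β ∈ C, ∀ γ ∈ C, β ≠ γ → 3 ≤ hammingDist β γ :=
    fun β hβ γ hγ hne => hδ.2 ⟨β, hβ, γ, hγ, hne, rfl⟩
  have h2 : hammingDist α π = 2 := hπ.1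
  have h2' : hammingDist α π' = 2 := hπ'.1
  have hMCdef : MC C π π' = (C ∩ GammaSet π 2 ∩ GammaSet π' 2).ncard := rfl
  have hc1 : (diffSet α π).card = 2 := h2
  have hc2 : (diffSet α π').card = 2 := h2'
  have hdcard : (diffSet π π').card = 3 := hd
  have hαM : α ∈ C ∩ GammaSet π 2 ∩ GammaSet π' 2 := by
    refine ⟨⟨hαC, ?_⟩, ?_⟩
    · show hammingDist π α = 2; rw [hammingDist_comm]; exact h2
    · show hammingDist π' α = 2; rw [hammingDist_comm]; exact h2'
  have hbound : MC C π π' ≤ 3 := by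
    -- find a shared coordinate and name the diff sets
    have hinter : (diffSet α π ∩ diffSet α π').Nonempty := by
      rw [Finset.nonempty_iff_ne_empty]
      intro hemp
      have hsub : diffSet α π ∪ diffSet α π' ⊆ diffSet π π' := by
        intro l hl
        rcases Finset.mem_union.mp hl with hl1 | hl2
        · have hl2 : l ∉ diffSet α π' := fun h =>
            (Finset.notMem_empty l) (hemp ▸ Finset.mem_inter.mpr ⟨hl1, h⟩)
          simp only [diffSet, Finset.mem_filter, Finset.mem_univ, true_and, not_not] at hl1 hl2 ⊢
          rw [← hl2]; exact fun e => hl1 e.symm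
        · have hl1 : l ∉ diffSet α π := fun h =>
            (Finset.notMem_empty l) (hemp ▸ Finset.mem_inter.mpr ⟨h, hl2⟩)
          simp only [diffSet, Finset.mem_filter, Finset.mem_univ, true_and, not_not] at hl1 hl2 ⊢
          rw [← hl1]; exact hl2
      have hdisj : Disjoint (diffSet α π) (diffSet α π') :=
        Finset.disjoint_iff_inter_eq_empty.mpr hemp
      have := Finset.card_le_card hsub
      rw [Finset.card_union_of_disjoint hdisj, hc1, hc2, hdcard] at this
      omega
    obtain ⟨j, hjmem⟩ := hinter
    have hj1 : j ∈ diffSet α π := (Finset.mem_inter.mp hjmem).1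
    have hj2 : j ∈ diffSet α π' := (Finset.mem_inter.mp hjmem).2
    obtain ⟨a, b, hab, hD1ab⟩ := Finset.card_eq_two.mp hc1
    obtain ⟨c, d, hcd, hD2cd⟩ := Finset.card_eq_two.mp hc2
    have hD1' : ∃ i, diffSet α π = {i, j} := by
      rw [hD1ab] at hj1 ⊢
      rcases Finset.mem_insert.mp hj1 with rfl | hb
      · exact ⟨b, Finset.pair_comm _ _⟩
      · rw [Finset.mem_singleton.mp hb]
        exact ⟨a, rfl⟩
    have hD2' : ∃ k, diffSet α π' = {j, k} := by
      rw [hD2cd] at hj2 ⊢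
      rcases Finset.mem_insert.mp hj2 with rfl | hb
      · exact ⟨d, rfl⟩
      · rw [Finset.mem_singleton.mp hb]
        exact ⟨c, Finset.pair_comm _ _⟩
    obtain ⟨i, hD1⟩ := hD1'
    obtain ⟨k, hD2⟩ := hD2'
    obtain ⟨hij, hik, hjk, hπi, hcase⟩ :=
      stmt7_main C α π π' hαC hmin h2 h2' hd i j k hD1 hD2
    rw [hMCdef]
    rcases hcase with h | ⟨β, hβne, h⟩ | ⟨a', c', _, _, _, _, h⟩
    · rw [h, Set.ncard_singleton]; omega
    · rw [h]
      calc ({α, β} : Set (Fin m → Fin q)).ncard ≤ ({β} : Set (Fin m → Fin q)).ncard + 1 :=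
            Set.ncard_insert_le _ _
        _ ≤ 3 := by rw [Set.ncard_singleton]; omega
    · rw [h]
      calc ({α, update3 α i j k (π i) (π' j) a',
              update3 α i j k c' (π j) (π' k)} : Set (Fin m → Fin q)).ncard
          ≤ ({update3 α i j k (π i) (π' j) a',
              update3 α i j k c' (π j) (π' k)} : Set (Fin m → Fin q)).ncard + 1 :=
            Set.ncard_insert_le _ _
        _ ≤ (({update3 α i j k c' (π j) (π' k)} : Set (Fin m → Fin q)).ncard + 1) + 1 := by
            have := Set.ncard_insert_le (update3 α i j k (π i) (π' j) a')
              ({update3 α i j k c' (π j) (π' k)} : Set (Fin m → Fin q))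
            omega
        _ ≤ 3 := by rw [Set.ncard_singleton]
  refine ⟨⟨?_, hbound⟩, ?_⟩
  · rw [hMCdef]
    have : 0 < (C ∩ GammaSet π 2 ∩ GammaSet π' 2).ncard :=
      (Set.ncard_pos (Set.toFinite _)).mpr ⟨α, hαM⟩
    omega
  · intro i j k hMC3 hD1 hD2
    obtain ⟨hij, hik, hjk, hπi, hcase⟩ :=
      stmt7_main C α π π' hαC hmin h2 h2' hd i j k hD1 hD2
    rcases hcase with h | ⟨β, hβne, h⟩ | ⟨a', c', ha1, ha2, hc1', hc2', h⟩
    · rw [hMCdef, h, Set.ncard_singleton] at hMC3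
      omega
    · rw [hMCdef, h, Set.ncard_pair (Ne.symm hβne)] at hMC3
      omega
    · exact ⟨a', c', ha1, ha2, hc1', hc2', h⟩
end

section
/- Suppose (q,l) ∉ {(3,1), (2,2)} with q ≥ 2, l ≥ 1. Then the code C(S_q,l) in H(lq,q) is not elusive: every automorphism of H(lq,q) that fixes the neighbour set C(S_q,l)_1 setwise also fixes C(S_q,l) setwise; that is, Aut(C(S_q,l)_1) = Aut(C(S_q,l)). -/
variable {M Q : Type*}

/-- The permutation code `C(T)` in `H(q,q)`: vertices `α(g) = (1^g, …, q^g)` for `g ∈ T`. -/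
def permCode (q : ℕ) (T : Set (Equiv.Perm (Fin q))) : Set (Fin q → Fin q) :=
  {α | ∃ g ∈ T, α = ⇑g}

/-- The code `C(T,l)` in `H(lq,q)`, with entries indexed by `Q × L`: concatenations
`(α(g₁),…,α(g_l))` (entry `(i,j)` equal to `i^{g_j}`) whose product `g₁g₂⋯g_l` lies in `T`. -/
def permCodeL (q l : ℕ) (T : Set (Equiv.Perm (Fin q))) : Set (Fin q × Fin l → Fin q) :=
  {β | ∃ g : Fin l → Equiv.Perm (Fin q),
    (∀ i j, β (i, j) = g j i) ∧ (List.ofFn g).prod ∈ T}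


open Finset

variable {q l : ℕ}

/-- The image of column `j`. -/
def colImg (q l : ℕ) (β : Fin q × Fin l → Fin q) (j : Fin l) : Finset (Fin q) :=
  Finset.image (fun i => β (i, j)) Finset.univ

/-- The total defect of a vertex. -/
def defect (q l : ℕ) (β : Fin q × Fin l → Fin q) : ℕ :=
  ∑ j : Fin l, (q - (colImg q l β j).card)

lemma colImg_card_le (β : Fin q × Fin l → Fin q) (j : Fin l) :
    (colImg q l β j).card ≤ q := by
  simpa using Finset.card_le_univ (colImg q l β j)

lemma colImg_card_eq_iff (β : Fin q × Fin l → Fin q) (j : Fin l) :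
    (colImg q l β j).card = q ↔ Function.Injective (fun i => β (i, j)) := by
  constructor
  · intro h
    have h2 : ((Finset.univ : Finset (Fin q)).image (fun i => β (i, j))).card
        = (Finset.univ : Finset (Fin q)).card := by
      rw [Finset.card_univ, Fintype.card_fin]; exact h
    have := Finset.card_image_iff.mp h2
    intro x y hxy
    exact this (by simp) (by simp) hxy
  · intro h
    rw [colImg, Finset.card_image_of_injective _ h, Finset.card_univ, Fintype.card_fin]

lemma mem_code_iff (β : Fin q × Fin l → Fin q) :
    β ∈ permCodeL q l Set.univ ↔ ∀ j, (colImg q l β j).card = q := by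
  constructor
  · rintro ⟨g, hg, -⟩ j
    rw [colImg_card_eq_iff]
    intro x y hxy
    have : g j x = g j y := by rw [← hg x j, ← hg y j]; exact hxy
    exact (g j).injective this
  · intro h
    have hb : ∀ j, Function.Bijective (fun i => β (i, j)) := fun j =>
      Finite.injective_iff_bijective.mp ((colImg_card_eq_iff β j).mp (h j))
    exact ⟨fun j => Equiv.ofBijective _ (hb j), fun i j => rfl, Set.mem_univ _⟩

lemma mem_code_iff_defect (β : Fin q × Fin l → Fin q) :
    β ∈ permCodeL q l Set.univ ↔ defect q l β = 0 := by
  rw [mem_code_iff, defect, Finset.sum_eq_zero_iff]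
  constructor
  · intro h j _
    rw [h j, Nat.sub_self]
  · intro h j
    have h1 := h j (Finset.mem_univ j)
    have h2 := colImg_card_le β j
    omega

lemma hammingDist_one_iff {β ν : Fin q × Fin l → Fin q} :
    hammingDist β ν = 1 ↔ ∃ p a, a ≠ β p ∧ ν = Function.update β p a := by
  rw [hammingDist, Finset.card_eq_one]
  constructor
  · rintro ⟨p, hp⟩
    have hmem : ∀ p', β p' ≠ ν p' ↔ p' = p := by
      intro p'
      rw [← Finset.mem_singleton, ← hp]
      simp
    refine ⟨p, ν p, ((hmem p).mpr rfl).symm, funext fun p' => ?_⟩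
    by_cases h : p' = p
    · subst h; simp
    · rw [Function.update_of_ne h]
      by_contra hne
      exact h ((hmem p').mp (fun he => hne he.symm))
  · rintro ⟨p, a, ha, rfl⟩
    refine ⟨p, ?_⟩
    ext p'
    simp only [Finset.mem_filter, Finset.mem_univ, true_and, Finset.mem_singleton]
    constructor
    · intro h
      by_contra hp'
      rw [Function.update_of_ne hp'] at h
      exact h rfl
    · rintro rfl
      rw [Function.update_self]
      exact fun he => ha he.symm

lemma colImg_update_ne (β : Fin q × Fin l → Fin q) (i₀ : Fin q) (j₀ : Fin l) (a : Fin q)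
    {j : Fin l} (h : j ≠ j₀) :
    colImg q l (Function.update β (i₀, j₀) a) j = colImg q l β j := by
  unfold colImg
  apply Finset.image_congr
  intro i _
  simp only []
  rw [Function.update_apply, if_neg (by simp [Prod.ext_iff, h])]

lemma update_apply_col (β : Fin q × Fin l → Fin q) (i₀ i : Fin q) (j₀ : Fin l) (a : Fin q)
    (h : i ≠ i₀) : Function.update β (i₀, j₀) a (i, j₀) = β (i, j₀) := by
  rw [Function.update_apply, if_neg (by simp [Prod.ext_iff, h])]

lemma colImg_update_subset (β : Fin q × Fin l → Fin q) (i₀ : Fin q) (j₀ : Fin l) (a : Fin q) :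
    colImg q l (Function.update β (i₀, j₀) a) j₀ ⊆ insert a (colImg q l β j₀) := by
  intro v hv
  simp only [colImg, Finset.mem_image, Finset.mem_univ, true_and] at hv
  obtain ⟨i, rfl⟩ := hv
  rcases eq_or_ne i i₀ with rfl | h
  · simp
  · rw [update_apply_col β i₀ i j₀ a h]
    exact Finset.mem_insert_of_mem (Finset.mem_image_of_mem _ (Finset.mem_univ i))

lemma colImg_update_of_dup (β : Fin q × Fin l → Fin q) (i₀ : Fin q) (j₀ : Fin l) (a : Fin q)
    (i₂ : Fin q) (hne : i₂ ≠ i₀) (hdup : β (i₂, j₀) = β (i₀, j₀)) :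
    colImg q l (Function.update β (i₀, j₀) a) j₀ = insert a (colImg q l β j₀) := by
  apply Finset.Subset.antisymm (colImg_update_subset β i₀ j₀ a)
  intro v hv
  rcases Finset.mem_insert.mp hv with rfl | hv
  · simp only [colImg, Finset.mem_image, Finset.mem_univ, true_and]
    exact ⟨i₀, by simp⟩
  · simp only [colImg, Finset.mem_image, Finset.mem_univ, true_and] at hv ⊢
    obtain ⟨i, rfl⟩ := hv
    rcases eq_or_ne i i₀ with heq | h
    · exact ⟨i₂, by rw [update_apply_col β i₀ i₂ j₀ a hne, hdup, heq]⟩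
    · exact ⟨i, by rw [update_apply_col β i₀ i j₀ a h]⟩

lemma defect_update_le (β : Fin q × Fin l → Fin q) (p : Fin q × Fin l) (a : Fin q) :
    defect q l (Function.update β p a) ≤ defect q l β + 1 := by
  obtain ⟨i₀, j₀⟩ := p
  unfold defect
  rw [← Finset.sum_erase_add _ _ (Finset.mem_univ j₀),
      ← Finset.sum_erase_add _ (fun j => q - (colImg q l β j).card) (Finset.mem_univ j₀)]
  have heq : ∀ j ∈ Finset.univ.erase j₀,
      q - (colImg q l (Function.update β (i₀, j₀) a) j).card = q - (colImg q l β j).card := by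
    intro j hj
    rw [colImg_update_ne β i₀ j₀ a (Finset.mem_erase.mp hj).1]
  rw [Finset.sum_congr rfl heq]
  have h1 : (colImg q l β j₀).card ≤ (colImg q l (Function.update β (i₀, j₀) a) j₀).card + 1 := by
    have hsub : colImg q l β j₀ ⊆ insert (β (i₀, j₀))
        (colImg q l (Function.update β (i₀, j₀) a) j₀) := by
      have : β = Function.update (Function.update β (i₀, j₀) a) (i₀, j₀) (β (i₀, j₀)) := by
        rw [Function.update_idem, Function.update_eq_self]
      nth_rewrite 1 [this]
      exact colImg_update_subset _ i₀ j₀ _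
    calc (colImg q l β j₀).card ≤ _ := Finset.card_le_card hsub
      _ ≤ _ := Finset.card_insert_le _ _
  have h2 := colImg_card_le β j₀
  have h3 := colImg_card_le (Function.update β (i₀, j₀) a) j₀
  omega

lemma defect_le_update (β : Fin q × Fin l → Fin q) (p : Fin q × Fin l) (a : Fin q) :
    defect q l β ≤ defect q l (Function.update β p a) + 1 := by
  have h := defect_update_le (Function.update β p a) p (β p)
  rwa [Function.update_idem, Function.update_eq_self] at h

lemma term_le_defect (β : Fin q × Fin l → Fin q) (j₀ : Fin l) :
    q - (colImg q l β j₀).card ≤ defect q l β := by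
  have := Finset.single_le_sum (f := fun j => q - (colImg q l β j).card)
    (fun j _ => Nat.zero_le _) (Finset.mem_univ j₀)
  simpa [defect] using this

lemma mem_nbhd_iff_defect (β : Fin q × Fin l → Fin q) :
    β ∈ neighbourSet (permCodeL q l Set.univ) ↔ defect q l β = 1 := by
  constructor
  · rintro ⟨hnot, c, hc, hd⟩
    obtain ⟨p, a, ha, rfl⟩ := hammingDist_one_iff.mp hd
    have h1 := defect_le_update β p a
    rw [(mem_code_iff_defect _).mp hc] at h1
    have h0 : defect q l β ≠ 0 := fun h => hnot ((mem_code_iff_defect β).mpr h)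
    omega
  · intro hd
    obtain ⟨j₀, hj₀⟩ : ∃ j₀, q - (colImg q l β j₀).card ≠ 0 := by
      by_contra h
      push_neg at h
      rw [defect, Finset.sum_eq_zero (fun j _ => h j)] at hd
      exact one_ne_zero hd.symm
    have hle := colImg_card_le β j₀
    have hcard : (colImg q l β j₀).card < q := by omega
    have hterm1 : q - (colImg q l β j₀).card = 1 := by
      have := term_le_defect β j₀; omega
    have hother : ∀ j, j ≠ j₀ → (colImg q l β j).card = q := by
      intro j hj
      have hsum : ∑ j' ∈ Finset.univ.erase j₀, (q - (colImg q l β j').card) = 0 := by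
        have h5 : ∑ j' ∈ Finset.univ.erase j₀, (q - (colImg q l β j').card)
            + (q - (colImg q l β j₀).card) = defect q l β :=
          Finset.sum_erase_add Finset.univ _ (Finset.mem_univ j₀)
        omega
      have := Finset.sum_eq_zero_iff.mp hsum j (Finset.mem_erase.mpr ⟨hj, Finset.mem_univ j⟩)
      have := colImg_card_le β j
      omega
    -- duplicate in column j₀
    have hni : ¬ Function.Injective (fun i => β (i, j₀)) := by
      intro h
      rw [← colImg_card_eq_iff] at h
      omega
    rw [Function.not_injective_iff] at hni
    obtain ⟨i₂, i₀, hdup, hne⟩ := hni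
    -- missing value in column j₀
    obtain ⟨m, hm⟩ : ∃ m, m ∉ colImg q l β j₀ := by
      by_contra h
      push_neg at h
      have : (Finset.univ : Finset (Fin q)) ⊆ colImg q l β j₀ := fun v _ => h v
      have := Finset.card_le_card this
      simp only [Finset.card_univ, Fintype.card_fin] at this
      omega
    have hmne : m ≠ β (i₀, j₀) := by
      intro he
      exact hm (he ▸ Finset.mem_image_of_mem _ (Finset.mem_univ i₀))
    refine ⟨fun h => by rw [mem_code_iff_defect] at h; omega,
      Function.update β (i₀, j₀) m, ?_, ?_⟩
    · rw [mem_code_iff]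
      intro j
      rcases eq_or_ne j j₀ with rfl | hj
      · rw [colImg_update_of_dup β i₀ j m i₂ hne hdup,
          Finset.card_insert_of_notMem hm]
        omega
      · rw [colImg_update_ne β i₀ j₀ m hj]
        exact hother j hj
    · exact hammingDist_one_iff.mpr ⟨(i₀, j₀), m, hmne, rfl⟩

lemma code_char (hq : 2 ≤ q) (hl : 1 ≤ l) (h1 : (q, l) ≠ (3, 1)) (h2 : (q, l) ≠ (2, 2))
    (β : Fin q × Fin l → Fin q) :
    β ∈ permCodeL q l Set.univ ↔
      (β ∉ neighbourSet (permCodeL q l Set.univ) ∧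
        ∀ ν, hammingDist β ν = 1 → ν ∈ neighbourSet (permCodeL q l Set.univ)) := by
  have hq1 : (0:ℕ) < q := by omega
  have hl1 : (0:ℕ) < l := by omega
  have hnontriv : Nontrivial (Fin q) := Fin.nontrivial_iff_two_le.mpr hq
  constructor
  · intro hβ
    have hd0 := (mem_code_iff_defect β).mp hβ
    constructor
    · rw [mem_nbhd_iff_defect]; omega
    · intro ν hν
      rw [mem_nbhd_iff_defect]
      obtain ⟨p, a, ha, rfl⟩ := hammingDist_one_iff.mp hν
      obtain ⟨i₀, j₀⟩ := p
      have hcards := (mem_code_iff β).mp hβ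
      have hinj := (colImg_card_eq_iff β j₀).mp (hcards j₀)
      have hsurj : Function.Surjective (fun i => β (i, j₀)) :=
        Finite.injective_iff_surjective.mp hinj
      obtain ⟨i₂, hi₂⟩ := hsurj a
      have hne : i₂ ≠ i₀ := fun he => ha (by rw [← hi₂, he])
      have hub := defect_update_le β (i₀, j₀) a
      have hni : ¬ Function.Injective (fun i => Function.update β (i₀, j₀) a (i, j₀)) := by
        intro h
        apply hne (h ?_)
        show Function.update β (i₀, j₀) a (i₂, j₀) = Function.update β (i₀, j₀) a (i₀, j₀)
        rw [update_apply_col β i₀ i₂ j₀ a hne, Function.update_self]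
        exact hi₂
      have hcard : (colImg q l (Function.update β (i₀, j₀) a) j₀).card ≠ q :=
        fun h => hni ((colImg_card_eq_iff _ j₀).mp h)
      have hle := colImg_card_le (Function.update β (i₀, j₀) a) j₀
      have hterm := term_le_defect (Function.update β (i₀, j₀) a) j₀
      omega
  · rintro ⟨hnot, hnbr⟩
    rw [mem_code_iff_defect]
    by_contra h0
    have hd1 : defect q l β ≠ 1 := fun h => hnot ((mem_nbhd_iff_defect β).mpr h)
    set p0 : Fin q × Fin l := (⟨0, hq1⟩, ⟨0, hl1⟩) with hp0
    obtain ⟨a0, ha0⟩ := exists_ne (β p0)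
    have hν0 := hnbr (Function.update β p0 a0) (hammingDist_one_iff.mpr ⟨p0, a0, ha0, rfl⟩)
    rw [mem_nbhd_iff_defect] at hν0
    have hd2 : defect q l β = 2 := by
      have := defect_le_update β p0 a0; omega
    by_cases hA : ∃ j₀, (colImg q l β j₀).card < q ∧ 2 ≤ (colImg q l β j₀).card
    · obtain ⟨j₀, hc1, hc2⟩ := hA
      have hni : ¬ Function.Injective (fun i => β (i, j₀)) :=
        fun h => absurd ((colImg_card_eq_iff β j₀).mpr h) (by omega)
      rw [Function.not_injective_iff] at hni
      obtain ⟨i₂, i₀, hdup, hne⟩ := hni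
      obtain ⟨b, hb, hbne⟩ := Finset.exists_mem_ne (s := colImg q l β j₀) (by omega) (β (i₀, j₀))
      have hν := hnbr (Function.update β (i₀, j₀) b)
        (hammingDist_one_iff.mpr ⟨(i₀, j₀), b, hbne, rfl⟩)
      rw [mem_nbhd_iff_defect] at hν
      have heq : defect q l (Function.update β (i₀, j₀) b) = defect q l β := by
        unfold defect
        apply Finset.sum_congr rfl
        intro j _
        rcases eq_or_ne j j₀ with rfl | hj
        · rw [colImg_update_of_dup β i₀ j b i₂ hne hdup, Finset.insert_eq_self.mpr hb]
        · rw [colImg_update_ne β i₀ j₀ b hj]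
      omega
    · push_neg at hA
      by_cases hB : ∃ j₁, (colImg q l β j₁).card = q
      · obtain ⟨j₁, hj₁⟩ := hB
        set i0 : Fin q := ⟨0, hq1⟩ with hi0
        obtain ⟨a, ha⟩ := exists_ne (β (i0, j₁))
        have hν := hnbr (Function.update β (i0, j₁) a)
          (hammingDist_one_iff.mpr ⟨(i0, j₁), a, ha, rfl⟩)
        rw [mem_nbhd_iff_defect] at hν
        have hinj := (colImg_card_eq_iff β j₁).mp hj₁
        have hsurj : Function.Surjective (fun i => β (i, j₁)) :=
          Finite.injective_iff_surjective.mp hinj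
        obtain ⟨i₂, hi₂⟩ := hsurj a
        have hne : i₂ ≠ i0 := fun he => ha (by rw [← hi₂, he])
        have hni : ¬ Function.Injective (fun i => Function.update β (i0, j₁) a (i, j₁)) := by
          intro h
          apply hne (h ?_)
          show Function.update β (i0, j₁) a (i₂, j₁) = Function.update β (i0, j₁) a (i0, j₁)
          rw [update_apply_col β i0 i₂ j₁ a hne, Function.update_self]
          exact hi₂
        have hcard : (colImg q l (Function.update β (i0, j₁) a) j₁).card ≠ q :=
          fun h => hni ((colImg_card_eq_iff _ j₁).mp h)
        have hsplit1 : ∑ j ∈ Finset.univ.erase j₁,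
            (q - (colImg q l (Function.update β (i0, j₁) a) j).card)
            + (q - (colImg q l (Function.update β (i0, j₁) a) j₁).card)
            = defect q l (Function.update β (i0, j₁) a) :=
          Finset.sum_erase_add _ _ (Finset.mem_univ j₁)
        have hsplit2 : ∑ j ∈ Finset.univ.erase j₁, (q - (colImg q l β j).card)
            + (q - (colImg q l β j₁).card) = defect q l β :=
          Finset.sum_erase_add _ _ (Finset.mem_univ j₁)
        have hsame : ∑ j ∈ Finset.univ.erase j₁,
            (q - (colImg q l (Function.update β (i0, j₁) a) j).card)
            = ∑ j ∈ Finset.univ.erase j₁, (q - (colImg q l β j).card) :=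
          Finset.sum_congr rfl
            (fun j hj => by rw [colImg_update_ne β i0 j₁ a (Finset.mem_erase.mp hj).1])
        have hle := colImg_card_le (Function.update β (i0, j₁) a) j₁
        omega
      · push_neg at hB
        have hconst : ∀ j, q - (colImg q l β j).card = q - 1 := by
          intro j
          have h3 := hA j (lt_of_le_of_ne (colImg_card_le β j) (hB j))
          have h4 : 1 ≤ (colImg q l β j).card :=
            Finset.card_pos.mpr ⟨β (⟨0, hq1⟩, j),
              Finset.mem_image_of_mem _ (Finset.mem_univ _)⟩
          omega
        have hsum : defect q l β = l * (q - 1) := by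
          rw [defect, Finset.sum_congr rfl (fun j _ => hconst j), Finset.sum_const,
            Finset.card_univ, Fintype.card_fin, smul_eq_mul]
        have hq3 : ¬(q = 3 ∧ l = 1) := fun ⟨hq', hl'⟩ => h1 (by rw [hq', hl'])
        have hq2 : ¬(q = 2 ∧ l = 2) := fun ⟨hq', hl'⟩ => h2 (by rw [hq', hl'])
        have hterm := term_le_defect β ⟨0, hl1⟩
        rw [hconst ⟨0, hl1⟩] at hterm
        rcases (by omega : q = 2 ∨ q = 3) with rfl | rfl
        · exact hq2 ⟨rfl, by omega⟩
        · exact hq3 ⟨rfl, by omega⟩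

lemma image_eq_of_subsets {α : Type*} (y : α ≃ α) {S : Set α}
    (hs1 : y '' S ⊆ S) (hs2 : y.symm '' S ⊆ S) : y '' S = S := by
  apply hs1.antisymm
  intro s hs
  exact ⟨y.symm s, hs2 ⟨s, hs, rfl⟩, by simp⟩

/-- If `(q,l) ∉ {(3,1),(2,2)}`, the code `C(S_q,l)` is not elusive: an
automorphism of `H(lq,q)` fixes the neighbour set of `C(S_q,l)` setwise iff it fixes
`C(S_q,l)` setwise, i.e. `Aut(C(S_q,l)_1) = Aut(C(S_q,l))`. -/
theorem stmt_10 (q l : ℕ) (hq : 2 ≤ q) (hl : 1 ≤ l)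
    (h1 : (q, l) ≠ (3, 1)) (h2 : (q, l) ≠ (2, 2)) :
    ∀ x : (Fin q × Fin l → Fin q) ≃ (Fin q × Fin l → Fin q), IsAut x →
      (x '' neighbourSet (permCodeL q l Set.univ) = neighbourSet (permCodeL q l Set.univ) ↔
        x '' permCodeL q l Set.univ = permCodeL q l Set.univ) := by
  intro x hx
  have hxinv : IsAut x.symm := fun a b => by
    have := hx (x.symm a) (x.symm b)
    simp only [Equiv.apply_symm_apply] at this
    exact this.symm
  constructor
  · intro hfix
    have key : ∀ y : (Fin q × Fin l → Fin q) ≃ (Fin q × Fin l → Fin q), IsAut y →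
        y '' neighbourSet (permCodeL q l Set.univ) = neighbourSet (permCodeL q l Set.univ) →
        y '' permCodeL q l Set.univ ⊆ permCodeL q l Set.univ := by
      intro y hy hyfix
      rintro _ ⟨β, hβ, rfl⟩
      obtain ⟨hβ1, hβ2⟩ := (code_char hq hl h1 h2 β).mp hβ
      refine (code_char hq hl h1 h2 (y β)).mpr ⟨?_, ?_⟩
      · intro hmem
        rw [← hyfix] at hmem
        obtain ⟨β', hβ', he⟩ := hmem
        exact hβ1 (y.injective he ▸ hβ')
      · intro ν hν
        have hdist : hammingDist β (y.symm ν) = 1 := by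
          have h3 := hy β (y.symm ν)
          rw [Equiv.apply_symm_apply] at h3
          rw [← h3]
          exact hν
        have h4 := hβ2 _ hdist
        have h5 : ν = y (y.symm ν) := (y.apply_symm_apply ν).symm
        rw [h5, ← hyfix]
        exact ⟨_, h4, rfl⟩
    have hsub1 := key x hx hfix
    have hfix' : x.symm '' neighbourSet (permCodeL q l Set.univ)
        = neighbourSet (permCodeL q l Set.univ) := by
      have h6 : x.symm '' (x '' neighbourSet (permCodeL q l Set.univ))
          = neighbourSet (permCodeL q l Set.univ) := Equiv.symm_image_image x _
      rw [hfix] at h6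
      exact h6
    exact image_eq_of_subsets x hsub1 (key x.symm hxinv hfix')
  · intro hfix
    have key : ∀ y : (Fin q × Fin l → Fin q) ≃ (Fin q × Fin l → Fin q), IsAut y →
        y '' permCodeL q l Set.univ = permCodeL q l Set.univ →
        y '' neighbourSet (permCodeL q l Set.univ) ⊆ neighbourSet (permCodeL q l Set.univ) := by
      intro y hy hyfix
      rintro _ ⟨ν, ⟨hν1, c, hc, hd⟩, rfl⟩
      refine ⟨?_, y c, ?_, ?_⟩
      · intro hyν
        rw [← hyfix] at hyν
        obtain ⟨ν', hν', he⟩ := hyν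
        exact hν1 (y.injective he ▸ hν')
      · rw [← hyfix]
        exact ⟨c, hc, rfl⟩
      · rw [hy]
        exact hd
    have hfix' : x.symm '' permCodeL q l Set.univ = permCodeL q l Set.univ := by
      have h6 : x.symm '' (x '' permCodeL q l Set.univ) = permCodeL q l Set.univ :=
        Equiv.symm_image_image x _
      rw [hfix] at h6
      exact h6
    exact image_eq_of_subsets x (key x hx hfix) (key x.symm hxinv hfix')
end

section
/- Suppose (C,α,x) is an elusive triple in H(m,q) where the code C has minimum distance δ ≥ 3. Then m ≥ q. -/
variable {M Q : Type*}

/-- If `(C,α,x)` is an elusive triple in `H(m,q)` with minimum distance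
`δ ≥ 3`, then `m ≥ q`. -/
theorem stmt_13 (m q : ℕ) (C : Set (Fin m → Fin q)) (α : Fin m → Fin q)
    (x : (Fin m → Fin q) ≃ (Fin m → Fin q))
    (hET : IsElusiveTriple C α x) (hδ : ∃ δ : ℕ, 3 ≤ δ ∧ HasMinDist C δ) :
    q ≤ m := by
  classical
  obtain ⟨δ, hδ3, hδmin⟩ := hδ
  obtain ⟨hAut, hC1, hαC, hxαC⟩ := hET
  rcases Nat.eq_zero_or_pos m with hm | hm
  · have hxa : x α = α := funext fun k => (Fin.cast hm k).elim0
    exfalso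
    exact hxαC (show x α ∈ C by rw [hxa]; exact hαC)
  set i : Fin m := ⟨0, hm⟩ with hi
  -- minimum distance ≥ 3 between distinct codewords
  have hmin : ∀ c ∈ C, ∀ c' ∈ C, c ≠ c' → 3 ≤ hammingDist c c' := by
    intro c hc c' hc' hne
    exact le_trans hδ3 (hδmin.2 ⟨c, hc, c', hc', hne, rfl⟩)
  have hαnotC1 : α ∉ neighbourSet C := fun h => h.1 hαC
  have hxαnotC1 : x α ∉ neighbourSet C := by
    intro h
    rw [← hC1] at h
    obtain ⟨b, hb, hbe⟩ := h
    exact hαnotC1 (x.injective hbe ▸ hb)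
  have key : ∀ a : Fin q, a ≠ x α i → ∃ j : Fin m, j ≠ i ∧ ∃ c ∈ C,
      c i = a ∧ ∀ k, k ≠ i → k ≠ j → c k = x α k := by
    intro a ha
    set ν : Fin m → Fin q := Function.update (x α) i a with hν
    have hfil : ({k | x α k ≠ ν k} : Finset (Fin m)) = {i} := by
      ext k
      simp only [Finset.mem_filter, Finset.mem_univ, true_and, Finset.mem_singleton]
      constructor
      · intro h
        by_contra hk
        exact h (Function.update_of_ne hk _ _).symm
      · rintro rfl
        rw [hν, Function.update_self]
        exact fun h => ha h.symm
    have hd1 : hammingDist (x α) ν = 1 := by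
      rw [hammingDist, hfil, Finset.card_singleton]
    set μ := x.symm ν with hμ
    have hxμ : x μ = ν := x.apply_symm_apply ν
    have hdαμ : hammingDist α μ = 1 := by
      rw [← hAut α μ, hxμ]; exact hd1
    have hμC : μ ∉ C := by
      intro hμC
      have hne : α ≠ μ := by
        intro h; rw [h, hammingDist_self] at hdαμ; exact one_ne_zero hdαμ.symm
      have := hmin α hαC μ hμC hne
      omega
    have hμC1 : μ ∈ neighbourSet C :=
      ⟨hμC, α, hαC, by rw [hammingDist_comm]; exact hdαμ⟩
    have hνC1 : ν ∈ neighbourSet C := by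
      have : x μ ∈ x '' neighbourSet C := ⟨μ, hμC1, rfl⟩
      rw [hC1, hxμ] at this; exact this
    obtain ⟨hνC, c, hcC, hdνc⟩ := hνC1
    rw [hammingDist] at hdνc
    obtain ⟨p, hp⟩ := Finset.card_eq_one.mp hdνc
    have hagree : ∀ k, k ≠ p → ν k = c k := by
      intro k hk
      by_contra h
      have : k ∈ ({k | ν k ≠ c k} : Finset (Fin m)) := by
        simp only [Finset.mem_filter, Finset.mem_univ, true_and]; exact h
      rw [hp, Finset.mem_singleton] at this
      exact hk this
    by_cases hpi : p = i
    · exfalso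
      -- then c agrees with x α off i, so d(x α, c) ≤ 1
      have hsub : ({k | x α k ≠ c k} : Finset (Fin m)) ⊆ {i} := by
        intro k hk
        simp only [Finset.mem_filter, Finset.mem_univ, true_and] at hk
        rw [Finset.mem_singleton]
        by_contra hki
        exact hk ((Function.update_of_ne hki _ _).symm.trans (hagree k (hpi ▸ hki)))
      have hle : hammingDist (x α) c ≤ 1 := by
        rw [hammingDist]
        exact le_trans (Finset.card_le_card hsub) (by simp)
      interval_cases h : hammingDist (x α) c
      · exact hxαC (hammingDist_eq_zero.mp h ▸ hcC)
      · exact hxαnotC1 ⟨hxαC, c, hcC, h⟩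
    · refine ⟨p, hpi, c, hcC, ?_, ?_⟩
      · rw [← hagree i (fun h => hpi h.symm), hν, Function.update_self]
      · intro k hki hkp
        rw [← hagree k hkp, hν, Function.update_of_ne hki]
  choose j hji c hcC hcval hcrest using key
  set f : Fin q → Fin m := fun a => if h : a = x α i then i else j a h with hf
  have hinj : Function.Injective f := by
    intro a a' hff
    by_contra hne
    simp only [hf] at hff
    split_ifs at hff with h1 h2 h2
    · exact hne (h1.trans h2.symm)
    · exact hji a' h2 hff.symm
    · exact hji a h1 hff
    · have hcne : c a h1 ≠ c a' h2 := by
        intro h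
        apply hne
        rw [← hcval a h1, ← hcval a' h2, h]
      have hsub : ({k | c a h1 k ≠ c a' h2 k} : Finset (Fin m)) ⊆ {i, j a h1} := by
        intro k hk
        simp only [Finset.mem_filter, Finset.mem_univ, true_and] at hk
        simp only [Finset.mem_insert, Finset.mem_singleton]
        by_contra hkij
        push_neg at hkij
        exact hk ((hcrest a h1 k hkij.1 hkij.2).trans
          (hcrest a' h2 k hkij.1 (hff ▸ hkij.2)).symm)
      have := hmin _ (hcC a h1) _ (hcC a' h2) hcne
      have hle : hammingDist (c a h1) (c a' h2) ≤ 2 := by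
        rw [hammingDist]
        exact le_trans (Finset.card_le_card hsub)
          (le_trans (Finset.card_insert_le _ _) (by simp))
      omega
  simpa using Fintype.card_le_of_injective f hinj
end

section
/- Let (C,α,x) be an elusive triple in H(m,q) where the code C has minimum distance δ ≥ 3, and let π be a (C,α,x)-associate. Then there are exactly 2q−4 (C,α,x)-associates π' with d(π,π') = 3. -/
variable {M Q : Type*}

set_option linter.unusedSectionVars false
section ET14Helpers
variable [Fintype M] [DecidableEq M] [DecidableEq Q]

lemma ET14.hd_eq' (a b : M → Q) :
    hammingDist a b = (Finset.univ.filter fun i => a i ≠ b i).card := rfl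

lemma ET14.hd_le_of_agree {a b : M → Q} (s : Finset M) (h : ∀ i, i ∉ s → a i = b i) :
    hammingDist a b ≤ s.card := by
  rw [ET14.hd_eq']
  refine Finset.card_le_card fun i hi => ?_
  rw [Finset.mem_filter] at hi
  by_contra hs
  exact hi.2 (h i hs)

lemma ET14.dist_one' {a b : M → Q} (h : hammingDist a b = 1) :
    ∃ k, b k ≠ a k ∧ ∀ l, l ≠ k → b l = a l := by
  rw [ET14.hd_eq', Finset.card_eq_one] at h
  obtain ⟨k, hk⟩ := h
  have hmem : ∀ l, a l ≠ b l ↔ l = k := by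
    intro l
    rw [← Finset.mem_singleton, ← hk, Finset.mem_filter]
    simp
  refine ⟨k, Ne.symm ((hmem k).mpr rfl), fun l hl => ?_⟩
  by_contra h'
  exact hl ((hmem l).mp fun he => h' he.symm)

lemma ET14.dist_two' {a b : M → Q} (h : hammingDist a b = 2) :
    ∃ i j, i ≠ j ∧ b i ≠ a i ∧ b j ≠ a j ∧ ∀ k, k ≠ i → k ≠ j → b k = a k := by
  rw [ET14.hd_eq', Finset.card_eq_two] at h
  obtain ⟨i, j, hij, hs⟩ := h
  have hmem : ∀ l, a l ≠ b l ↔ (l = i ∨ l = j) := by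
    intro l
    have : l ∈ Finset.filter (fun i => a i ≠ b i) Finset.univ ↔ a l ≠ b l := by
      simp
    rw [← this, hs]; simp
  refine ⟨i, j, hij, Ne.symm ((hmem i).mpr (Or.inl rfl)), Ne.symm ((hmem j).mpr (Or.inr rfl)),
    fun k hk1 hk2 => ?_⟩
  by_contra h'
  rcases (hmem k).mp (fun he => h' he.symm) with h | h
  · exact hk1 h
  · exact hk2 h

lemma ET14.dist_two_at {a b : M → Q} (h : hammingDist a b = 2) {u : M} (hu : b u ≠ a u) :
    ∃ w, w ≠ u ∧ b w ≠ a w ∧ ∀ k, k ≠ u → k ≠ w → b k = a k := by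
  obtain ⟨i, j, hij, hi, hj, hoff⟩ := ET14.dist_two' h
  rcases eq_or_ne u i with rfl | hui
  · exact ⟨j, Ne.symm hij, hj, fun k h1 h2 => hoff k h1 h2⟩
  · rcases eq_or_ne u j with rfl | huj
    · exact ⟨i, fun h' => hij (h'.symm ▸ rfl), hi, fun k h1 h2 => hoff k h2 h1⟩
    · exact absurd (hoff u hui huj) hu

lemma ET14.hd_eq_three {a b : M → Q} {i j l : M} (hij : i ≠ j) (hil : i ≠ l) (hjl : j ≠ l)
    (h1 : a i ≠ b i) (h2 : a j ≠ b j) (h3 : a l ≠ b l)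
    (h4 : ∀ k, k ≠ i → k ≠ j → k ≠ l → a k = b k) : hammingDist a b = 3 := by
  rw [ET14.hd_eq']
  have hs : (Finset.univ.filter fun p => a p ≠ b p) = {i, j, l} := by
    ext k
    simp only [Finset.mem_filter, Finset.mem_univ, true_and, Finset.mem_insert,
      Finset.mem_singleton]
    constructor
    · intro hk
      by_contra hc
      push_neg at hc
      exact hk (h4 k hc.1 hc.2.1 hc.2.2)
    · rintro (rfl | rfl | rfl) <;> assumption
  rw [hs]
  exact Finset.card_eq_three.mpr ⟨i, j, l, hij, hil, hjl, rfl⟩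

lemma ET14.four_le_hd {a b : M → Q} {i j k l : M} (hij : i ≠ j) (hik : i ≠ k) (hil : i ≠ l)
    (hjk : j ≠ k) (hjl : j ≠ l) (hkl : k ≠ l)
    (h1 : a i ≠ b i) (h2 : a j ≠ b j) (h3 : a k ≠ b k) (h4 : a l ≠ b l) :
    4 ≤ hammingDist a b := by
  rw [ET14.hd_eq']
  have hsub : ({i, j, k, l} : Finset M) ⊆ Finset.univ.filter fun p => a p ≠ b p := by
    intro p hp
    simp only [Finset.mem_insert, Finset.mem_singleton] at hp
    rw [Finset.mem_filter]
    rcases hp with rfl | rfl | rfl | rfl <;> exact ⟨Finset.mem_univ _, by assumption⟩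
  have hc : ({i, j, k, l} : Finset M).card = 4 := by
    rw [Finset.card_insert_of_notMem (by simp [hij, hik, hil]),
      Finset.card_insert_of_notMem (by simp [hjk, hjl]), Finset.card_pair hkl]
  have := Finset.card_le_card hsub
  omega

end ET14Helpers

set_option maxHeartbeats 1000000
open ET14

/-- For an elusive triple with `δ ≥ 3` and an associate `π`, there are
exactly `2q - 4` associates `π'` with `d(π,π') = 3`. -/
theorem stmt_14 (m q : ℕ) (C : Set (Fin m → Fin q)) (α : Fin m → Fin q)
    (x : (Fin m → Fin q) ≃ (Fin m → Fin q))
    (hET : IsElusiveTriple C α x) (hδ : ∃ δ : ℕ, 3 ≤ δ ∧ HasMinDist C δ)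
    (π : Fin m → Fin q) (hπ : IsAssociate C α x π) :
    {π' : Fin m → Fin q | IsAssociate C α x π' ∧ hammingDist π π' = 3}.ncard
      = 2 * q - 4 := by
  classical
  obtain ⟨hAut, hfix, hαC, hxα⟩ := hET
  obtain ⟨δ, hδ3, hδmem, hδlb⟩ := hδ
  have hmin : ∀ a ∈ C, ∀ b ∈ C, a ≠ b → 3 ≤ hammingDist a b :=
    fun a ha b hb hne => hδ3.trans (hδlb ⟨a, ha, b, hb, hne, rfl⟩)
  have hmemCx : ∀ ν, ν ∈ x '' C ↔ x.symm ν ∈ C := by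
    intro ν
    constructor
    · rintro ⟨c, hc, rfl⟩; simpa using hc
    · intro h; exact ⟨x.symm ν, h, by simp⟩
  have hminx : ∀ a ∈ x '' C, ∀ b ∈ x '' C, a ≠ b → 3 ≤ hammingDist a b := by
    rintro a ⟨a', ha', rfl⟩ b ⟨b', hb', rfl⟩ hne
    rw [hAut]
    exact hmin a' ha' b' hb' fun h => hne (by rw [h])
  have hC1x : neighbourSet (x '' C) = neighbourSet C := by
    ext ν
    constructor
    · rintro ⟨hν, c, ⟨c', hc', rfl⟩, hd1⟩
      have h1 : x.symm ν ∉ C := fun h => hν ((hmemCx ν).mpr h)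
      have h2 : hammingDist (x.symm ν) c' = 1 := by
        have := hAut (x.symm ν) c'
        simp only [Equiv.apply_symm_apply] at this
        rw [← this]; exact hd1
      rw [← hfix]
      exact ⟨x.symm ν, ⟨h1, c', hc', h2⟩, by simp⟩
    · intro hν
      rw [← hfix] at hν
      obtain ⟨μ, ⟨hμ1, c, hc, hdc⟩, rfl⟩ := hν
      refine ⟨fun h => hμ1 (by simpa using (hmemCx _).mp h), x c, ⟨c, hc, rfl⟩, ?_⟩
      rw [hAut]; exact hdc
  have hπ2 : hammingDist α π = 2 := hπ.1
  have hπCx : π ∈ x '' C := hπ.2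
  have hαCx : α ∉ x '' C := by
    intro h
    rcases eq_or_ne α π with rfl | hne
    · simp at hπ2
    · have := hminx α h π hπCx hne
      omega
  have hΓ1 : ∀ ν, hammingDist α ν = 1 → ν ∈ neighbourSet C := by
    intro ν hd1
    refine ⟨?_, α, hαC, by rwa [hammingDist_comm]⟩
    intro hνC
    have hne : ν ≠ α := by
      rintro rfl; simp at hd1
    have := hmin ν hνC α hαC hne
    rw [hammingDist_comm] at hd1
    omega
  -- Key existence: for each position u and each a ≠ α u there is an element of C^x
  -- at distance 2 from α taking value a at u.
  have hKE : ∀ u a, a ≠ α u → ∃ σ, σ ∈ x '' C ∧ hammingDist α σ = 2 ∧ σ u = a := by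
    intro u a ha
    set ν := Function.update α u a with hνdef
    have hdν : hammingDist α ν = 1 := by
      rw [hd_eq', Finset.card_eq_one]
      refine ⟨u, ?_⟩
      ext k
      rcases eq_or_ne k u with rfl | hk
      · simp [hνdef, Ne.symm ha]
      · simp [hνdef, Function.update_of_ne hk, hk]
    have hν1 : ν ∈ neighbourSet (x '' C) := hC1x ▸ hΓ1 ν hdν
    obtain ⟨hνCx, σ, hσCx, hνσ⟩ := hν1
    have hle : hammingDist α σ ≤ 2 := by
      have := hammingDist_triangle α ν σ
      omega
    have h0 : σ ≠ α := fun h => hαCx (h ▸ hσCx)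
    have h0' : hammingDist α σ ≠ 0 := fun h => h0 (hammingDist_eq_zero.mp h).symm
    have h1 : hammingDist α σ ≠ 1 := by
      intro h
      exact (hC1x ▸ hΓ1 σ h : σ ∈ neighbourSet (x '' C)).1 hσCx
    have h2 : hammingDist α σ = 2 := by omega
    obtain ⟨k, hk1, hk2⟩ := dist_one' hνσ
    rcases eq_or_ne k u with rfl | hku
    · exfalso
      have hle1 : hammingDist α σ ≤ ({k} : Finset (Fin m)).card := by
        apply hd_le_of_agree
        intro l hl
        rw [Finset.mem_singleton] at hl
        have h3 : σ l = ν l := hk2 l hl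
        have h4 : ν l = α l := by simp [hνdef, Function.update_of_ne hl]
        rw [h3, h4]
      rw [Finset.card_singleton] at hle1
      omega
    · have h3 : σ u = ν u := hk2 u fun h => hku h.symm
      have h4 : ν u = a := by simp [hνdef]
      exact ⟨σ, hσCx, h2, by rw [h3, h4]⟩
  -- Key uniqueness: an element of C^x at distance 2 from α is determined by one
  -- position where it differs from α together with its value there.
  have hKU : ∀ u, ∀ σ ∈ x '' C, ∀ σ' ∈ x '' C,
      hammingDist α σ = 2 → hammingDist α σ' = 2 → σ u ≠ α u → σ u = σ' u → σ = σ' := by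
    intro u σ hσ σ' hσ' h2 h2' hu he
    by_contra hne
    have h3 := hminx σ hσ σ' hσ' hne
    obtain ⟨w, hwu, hw, hoff1⟩ := dist_two_at h2 hu
    have hu' : σ' u ≠ α u := he ▸ hu
    obtain ⟨w', hw'u, hw', hoff2⟩ := dist_two_at h2' hu'
    have hle : hammingDist σ σ' ≤ ({w, w'} : Finset (Fin m)).card := by
      apply hd_le_of_agree
      intro k hk
      simp only [Finset.mem_insert, Finset.mem_singleton] at hk
      push_neg at hk
      rcases eq_or_ne k u with rfl | hku
      · exact he
      · rw [hoff1 k hku hk.1, ← hoff2 k hku hk.2]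
    have hc2 : ({w, w'} : Finset (Fin m)).card ≤ 2 := by
      apply le_trans (Finset.card_insert_le _ _)
      simp
    omega
  obtain ⟨i, j, hij, hi, hj, hoffπ⟩ := dist_two' hπ2
  -- Structure lemma for associates at distance 3 from π
  have hH2 : ∀ u v, u ≠ v → π u ≠ α u → π v ≠ α v → (∀ k, k ≠ u → k ≠ v → π k = α k) →
      ∀ π', π' ∈ x '' C → hammingDist α π' = 2 → hammingDist π π' = 3 → π' u ≠ α u →
      π' v = α v ∧ π' u ≠ π u := by
    intro u v huv hu hv hoff π' hCx' h2' h3' hu'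
    obtain ⟨w, hwu, hw, hoff'⟩ := dist_two_at h2' hu'
    have hwv : w ≠ v := by
      rintro rfl
      have hle : hammingDist π π' ≤ ({u, w} : Finset (Fin m)).card := by
        apply hd_le_of_agree
        intro k hk
        simp only [Finset.mem_insert, Finset.mem_singleton] at hk
        push_neg at hk
        rw [hoff k hk.1 hk.2, ← hoff' k hk.1 hk.2]
      have hc2 : ({u, w} : Finset (Fin m)).card ≤ 2 := by
        apply le_trans (Finset.card_insert_le _ _); simp
      omega
    refine ⟨hoff' v (Ne.symm huv) (Ne.symm hwv), ?_⟩
    intro heq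
    have hle : hammingDist π π' ≤ ({v, w} : Finset (Fin m)).card := by
      apply hd_le_of_agree
      intro k hk
      simp only [Finset.mem_insert, Finset.mem_singleton] at hk
      push_neg at hk
      rcases eq_or_ne k u with rfl | hku
      · exact heq.symm
      · rw [hoff k hku hk.1, ← hoff' k hku hk.2]
    have hc2 : ({v, w} : Finset (Fin m)).card ≤ 2 := by
      apply le_trans (Finset.card_insert_le _ _); simp
    omega
  -- An associate at distance 3 from π differs from α at i or at j
  have hH0 : ∀ π', hammingDist α π' = 2 → hammingDist π π' = 3 →
      π' i ≠ α i ∨ π' j ≠ α j := by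
    intro π' h2' h3'
    by_contra hc
    push_neg at hc
    obtain ⟨k, l, hkl, hk, hl, hoff'⟩ := dist_two' h2'
    have hki : k ≠ i := fun h => hk (h ▸ hc.1)
    have hkj : k ≠ j := fun h => hk (h ▸ hc.2)
    have hli : l ≠ i := fun h => hl (h ▸ hc.1)
    have hlj : l ≠ j := fun h => hl (h ▸ hc.2)
    have h4 : 4 ≤ hammingDist π π' := by
      refine four_le_hd hij (Ne.symm hki) (Ne.symm hli) (Ne.symm hkj) (Ne.symm hlj) hkl
        ?_ ?_ ?_ ?_
      · rw [hc.1]; exact hi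
      · rw [hc.2]; exact hj
      · rw [hoffπ k hki hkj]; exact Ne.symm hk
      · rw [hoffπ l hli hlj]; exact Ne.symm hl
    omega
  -- Existence of distance-3 associates with prescribed value
  have hH1 : ∀ u v, u ≠ v → π u ≠ α u → π v ≠ α v → (∀ k, k ≠ u → k ≠ v → π k = α k) →
      ∀ a, a ≠ α u → a ≠ π u →
      ∃ σ, (IsAssociate C α x σ ∧ hammingDist π σ = 3) ∧ σ u = a := by
    intro u v huv hu hv hoff a ha hapu
    obtain ⟨σ, hσCx, hσ2, hσu⟩ := hKE u a ha
    have hσu' : σ u ≠ α u := by rw [hσu]; exact ha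
    obtain ⟨w, hwu, hw, hoffσ⟩ := dist_two_at hσ2 hσu'
    have hσπ : σ ≠ π := fun h => hapu (by rw [← hσu, h])
    have h3min := hminx π hπCx σ hσCx (Ne.symm hσπ)
    have hwv : w ≠ v := by
      rintro rfl
      have hle : hammingDist π σ ≤ ({u, w} : Finset (Fin m)).card := by
        apply hd_le_of_agree
        intro k hk
        simp only [Finset.mem_insert, Finset.mem_singleton] at hk
        push_neg at hk
        rw [hoff k hk.1 hk.2, ← hoffσ k hk.1 hk.2]
      have hc2 : ({u, w} : Finset (Fin m)).card ≤ 2 := by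
        apply le_trans (Finset.card_insert_le _ _); simp
      omega
    have h3 : hammingDist π σ = 3 := by
      refine hd_eq_three huv (Ne.symm hwu) (Ne.symm hwv) ?_ ?_ ?_ ?_
      · rw [hσu]; exact Ne.symm hapu
      · rw [hoffσ v (Ne.symm huv) (Ne.symm hwv)]; exact hv
      · rw [hoff w hwu hwv]; exact fun h => hw h.symm
      · intro k hk1 hk2 hk3
        rw [hoff k hk1 hk2, ← hoffσ k hk1 hk3]
    exact ⟨σ, ⟨⟨hσ2, hσCx⟩, h3⟩, hσu⟩
  -- Now set up the bijection
  set S := {π' : Fin m → Fin q | IsAssociate C α x π' ∧ hammingDist π π' = 3} with hSdef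
  set φ : (Fin m → Fin q) → Bool × Fin q :=
    fun π' => if π' i = α i then (false, π' j) else (true, π' i) with hφdef
  set Tfin : Finset (Bool × Fin q) :=
    ({true} ×ˢ ({α i, π i} : Finset (Fin q))ᶜ) ∪ ({false} ×ˢ ({α j, π j} : Finset (Fin q))ᶜ)
    with hTdef
  have hSmem : ∀ π' ∈ S, π' ∈ x '' C ∧ hammingDist α π' = 2 ∧ hammingDist π π' = 3 :=
    fun π' h => ⟨h.1.2, h.1.1, h.2⟩
  have hstruct : ∀ π' ∈ S,
      (π' i ≠ α i ∧ π' i ≠ π i ∧ π' j = α j) ∨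
      (π' i = α i ∧ π' j ≠ α j ∧ π' j ≠ π j) := by
    intro π' hmem
    obtain ⟨hCx', h2', h3'⟩ := hSmem π' hmem
    by_cases hcase : π' i = α i
    · right
      have hj' : π' j ≠ α j := by
        rcases hH0 π' h2' h3' with h | h
        · exact absurd hcase h
        · exact h
      obtain ⟨h1, h2⟩ := hH2 j i (Ne.symm hij) hj hi (fun k h1 h2 => hoffπ k h2 h1)
        π' hCx' h2' h3' hj'
      exact ⟨hcase, hj', h2⟩
    · left
      obtain ⟨h1, h2⟩ := hH2 i j hij hi hj hoffπ π' hCx' h2' h3' hcase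
      exact ⟨hcase, h2, h1⟩
  have hinj : Set.InjOn φ S := by
    intro p1 h1 p2 h2 he
    rcases hstruct p1 h1 with ⟨a1, b1, c1⟩ | ⟨a1, b1, c1⟩ <;>
      rcases hstruct p2 h2 with ⟨a2, b2, c2⟩ | ⟨a2, b2, c2⟩
    · simp only [hφdef, if_neg a1, if_neg a2, Prod.mk.injEq, true_and] at he
      exact hKU i p1 (hSmem p1 h1).1 p2 (hSmem p2 h2).1 (hSmem p1 h1).2.1
        (hSmem p2 h2).2.1 a1 he
    · simp [hφdef, if_neg a1, if_pos a2] at he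
    · simp [hφdef, if_pos a1, if_neg a2] at he
    · simp only [hφdef, if_pos a1, if_pos a2, Prod.mk.injEq, true_and] at he
      exact hKU j p1 (hSmem p1 h1).1 p2 (hSmem p2 h2).1 (hSmem p1 h1).2.1
        (hSmem p2 h2).2.1 b1 he
  have himg : φ '' S = ↑Tfin := by
    ext p
    constructor
    · rintro ⟨π', hmem, rfl⟩
      rcases hstruct π' hmem with ⟨a1, b1, c1⟩ | ⟨a1, b1, c1⟩
      · have : φ π' = (true, π' i) := by simp [hφdef, if_neg a1]
        rw [this]
        simp only [hTdef, Finset.coe_union, Set.mem_union, Finset.coe_product,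
          Set.mem_prod, Finset.coe_singleton, Set.mem_singleton_iff, Finset.coe_compl,
          Set.mem_compl_iff, Finset.mem_coe, Finset.mem_insert, Finset.mem_singleton]
        left
        exact ⟨trivial, by push_neg; exact ⟨a1, b1⟩⟩
      · have : φ π' = (false, π' j) := by simp [hφdef, if_pos a1]
        rw [this]
        simp only [hTdef, Finset.coe_union, Set.mem_union, Finset.coe_product,
          Set.mem_prod, Finset.coe_singleton, Set.mem_singleton_iff, Finset.coe_compl,
          Set.mem_compl_iff, Finset.mem_coe, Finset.mem_insert, Finset.mem_singleton]
        right
        exact ⟨trivial, by push_neg; exact ⟨b1, c1⟩⟩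
    · intro hp
      simp only [hTdef, Finset.coe_union, Set.mem_union, Finset.coe_product,
        Set.mem_prod, Finset.coe_singleton, Set.mem_singleton_iff, Finset.coe_compl,
        Set.mem_compl_iff, Finset.mem_coe, Finset.mem_insert, Finset.mem_singleton] at hp
      rcases hp with ⟨hp1, hp2⟩ | ⟨hp1, hp2⟩
      · push_neg at hp2
        obtain ⟨σ, hσS, hσu⟩ := hH1 i j hij hi hj hoffπ p.2 hp2.1 hp2.2
        refine ⟨σ, hσS, ?_⟩
        have : σ i ≠ α i := by rw [hσu]; exact hp2.1
        rw [hφdef]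
        simp only [if_neg this]
        rw [hσu, ← hp1]
      · push_neg at hp2
        obtain ⟨σ, hσS, hσu⟩ := hH1 j i (Ne.symm hij) hj hi
          (fun k h1 h2 => hoffπ k h2 h1) p.2 hp2.1 hp2.2
        refine ⟨σ, hσS, ?_⟩
        have hσj : σ j ≠ α j := by rw [hσu]; exact hp2.1
        have hσi : σ i = α i := by
          rcases hstruct σ hσS with ⟨_, _, h⟩ | ⟨h, _, _⟩
          · exact absurd h hσj
          · exact h
        rw [hφdef]
        simp only [if_pos hσi]
        rw [hσu, ← hp1]
  have hdis : Disjoint ({true} ×ˢ ({α i, π i} : Finset (Fin q))ᶜ)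
      ({false} ×ˢ ({α j, π j} : Finset (Fin q))ᶜ) := by
    rw [Finset.disjoint_left]
    intro p hp1 hp2
    rw [Finset.mem_product, Finset.mem_singleton] at hp1 hp2
    rw [hp1.1] at hp2
    exact Bool.noConfusion hp2.1
  have hcard : Tfin.card = 2 * q - 4 := by
    rw [hTdef, Finset.card_union_of_disjoint hdis, Finset.card_product, Finset.card_product,
      Finset.card_singleton, Finset.card_compl, Finset.card_compl,
      Finset.card_pair (Ne.symm hi), Finset.card_pair (Ne.symm hj), Fintype.card_fin]
    simp only [Finset.card_singleton]
    omega
  calc S.ncard = (φ '' S).ncard := (Set.ncard_image_of_injOn hinj).symm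
    _ = (↑Tfin : Set (Bool × Fin q)).ncard := by rw [himg]
    _ = Tfin.card := Set.ncard_coe_finset _
    _ = 2 * q - 4 := hcard
end

section
/- The Reed–Muller code RM_q(s−1,d) is an elusive code: there exists an automorphism of the Hamming graph H(q^d,q) that fixes the neighbour set RM_q(s−1,d)_1 setwise but does not fix RM_q(s−1,d) setwise. -/
variable {M Q : Type*}

/-- The Reed–Muller code `RM_q(s,d)` (with `s = (q-1)d - 1`): the dual of the repetition
code, i.e. all vertices of `H(q^d, q)` whose entries sum to zero. -/
def RMs (F : Type*) [Field F] [Fintype F] (d : ℕ) : Set ((Fin d → F) → F) :=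
  {α | ∑ v : Fin d → F, α v = 0}

/-- The Reed–Muller code `RM_q(s-1,d)` (with `s = (q-1)d - 1`): the members `α` of
`RM_q(s,d)` which additionally satisfy `∑_{v ∈ M} α_v • v = 0`. -/
def RMs1 (F : Type*) [Field F] [Fintype F] (d : ℕ) : Set ((Fin d → F) → F) :=
  {α | ∑ v : Fin d → F, α v = 0 ∧ ∑ v : Fin d → F, α v • v = 0}

lemma mem_nbr_RMs1 (F : Type) [Field F] [Fintype F] [DecidableEq F] (d : ℕ)
    (ν : (Fin d → F) → F) :
    ν ∈ neighbourSet (RMs1 F d) ↔ ∑ v : Fin d → F, ν v ≠ 0 := by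
  constructor
  · rintro ⟨hν, c, ⟨hc1, hc2⟩, hdist⟩
    rw [hammingDist, Finset.card_eq_one] at hdist
    obtain ⟨w, hw⟩ := hdist
    have hne : ν w ≠ c w := by
      have : w ∈ ({w} : Finset _) := Finset.mem_singleton_self w
      rw [← hw, Finset.mem_filter] at this
      exact this.2
    have heq : ∀ v, v ≠ w → ν v = c v := by
      intro v hv
      by_contra h
      have : v ∈ ({w} : Finset _) := by rw [← hw]; simp [h]
      exact hv (Finset.mem_singleton.mp this)
    have key : ∑ v : Fin d → F, (ν v - c v) = ν w - c w := by
      rw [Finset.sum_eq_single w]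
      · intro v _ hv; rw [heq v hv]; ring
      · intro h; exact absurd (Finset.mem_univ w) h
    rw [Finset.sum_sub_distrib, hc1, sub_zero] at key
    rw [key]
    exact sub_ne_zero.mpr hne
  · intro ht
    set t := ∑ v : Fin d → F, ν v with htdef
    set S := ∑ v : Fin d → F, ν v • v with hSdef
    set w := t⁻¹ • S with hwdef
    refine ⟨fun h => ht h.1, Function.update ν w (ν w - t), ⟨?_, ?_⟩, ?_⟩
    · rw [Finset.sum_update_of_mem (Finset.mem_univ w), ← Finset.erase_eq]
      have := Finset.add_sum_erase Finset.univ ν (Finset.mem_univ w)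
      rw [← htdef] at this
      -- this : ν w + ∑ v in univ.erase w, ν v = t
      have h2 : ∑ v ∈ Finset.univ.erase w, ν v = t - ν w := by linear_combination this
      rw [h2]; ring
    · have hupd : ∑ v : Fin d → F, (Function.update ν w (ν w - t)) v • v
          = (ν w - t) • w + ∑ v ∈ Finset.univ.erase w, ν v • v := by
        rw [← Finset.add_sum_erase Finset.univ _ (Finset.mem_univ w),
          Function.update_self]
        congr 1
        apply Finset.sum_congr rfl
        intro v hv
        rw [Function.update_of_ne (Finset.ne_of_mem_erase hv)]
      have herase : ∑ v ∈ Finset.univ.erase w, ν v • v = S - ν w • w := by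
        have := Finset.add_sum_erase Finset.univ (fun v => ν v • v) (Finset.mem_univ w)
        rw [← hSdef] at this
        rw [← this]; abel
      rw [hupd, herase]
      have htw : t • w = S := by
        rw [hwdef, smul_smul, mul_inv_cancel₀ ht, one_smul]
      rw [sub_smul]
      rw [show ν w • w - t • w + (S - ν w • w) = S - t • w by abel, htw, sub_self]
    · rw [hammingDist]
      have hfil : (Finset.univ.filter fun v => ν v ≠ Function.update ν w (ν w - t) v)
          = ({w} : Finset _) := by
        ext v
        simp only [Finset.mem_filter, Finset.mem_univ, true_and, Finset.mem_singleton,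
          Function.update_apply]
        constructor
        · intro h; by_contra hv; simp [hv] at h
        · intro h; subst h; simp only [if_pos rfl, if_true]
          intro h; exact ht (by linear_combination h)
      rw [hfil, Finset.card_singleton]

/-- `RM_q(s-1,d)` is elusive: some automorphism of `H(q^d,q)` fixes its
neighbour set setwise but does not fix the code setwise. -/
theorem stmt_17 (F : Type) [Field F] [Fintype F] [DecidableEq F] (d : ℕ) (hd : 1 ≤ d)
    (hdq : (d, Fintype.card F) ≠ (1, 2)) :
    ∃ x : ((Fin d → F) → F) ≃ ((Fin d → F) → F), IsAut x ∧
      x '' neighbourSet (RMs1 F d) = neighbourSet (RMs1 F d) ∧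
      x '' RMs1 F d ≠ RMs1 F d := by
  classical
  set i0 : Fin d := ⟨0, hd⟩
  set e : Fin d → F := Pi.single i0 1 with he
  have he0 : e ≠ 0 := by
    intro h
    have : e i0 = 0 := by rw [h]; rfl
    rw [he, Pi.single_eq_same] at this
    exact one_ne_zero this
  set z : Fin d → F := 0 with hz
  have hze : z ≠ e := fun h => he0 h.symm
  set β : (Fin d → F) → F := Pi.single z 1 + Pi.single e (-1) with hβ
  have hβsum : ∑ v : Fin d → F, β v = 0 := by
    rw [hβ]
    simp only [Pi.add_apply, Finset.sum_add_distrib]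
    rw [Finset.sum_pi_single', Finset.sum_pi_single']
    simp
  have hβwt : ∑ v : Fin d → F, β v • v = -e := by
    rw [hβ]
    simp only [Pi.add_apply, add_smul, Finset.sum_add_distrib]
    have h1 : ∑ v : Fin d → F, (Pi.single z 1 : (Fin d → F) → F) v • v = (1 : F) • z := by
      rw [Finset.sum_eq_single z]
      · simp
      · intro v _ hv; rw [Pi.single_eq_of_ne hv, zero_smul]
      · intro h; exact absurd (Finset.mem_univ z) h
    have h2 : ∑ v : Fin d → F, (Pi.single e (-1) : (Fin d → F) → F) v • v = (-1 : F) • e := by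
      rw [Finset.sum_eq_single e]
      · simp
      · intro v _ hv; rw [Pi.single_eq_of_ne hv, zero_smul]
      · intro h; exact absurd (Finset.mem_univ e) h
    rw [h1, h2, hz]; simp
  refine ⟨Equiv.addRight β, ?_, ?_, ?_⟩
  · intro a b
    simp only [Equiv.coe_addRight, hammingDist]
    congr 1
    ext i
    simp [Finset.mem_filter]
  · ext ν
    constructor
    · rintro ⟨μ, hμ, rfl⟩
      rw [mem_nbr_RMs1] at hμ ⊢
      simpa [Finset.sum_add_distrib, hβsum] using hμ
    · intro hν
      refine ⟨ν - β, ?_, by simp⟩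
      rw [mem_nbr_RMs1] at hν ⊢
      simpa [Finset.sum_sub_distrib, hβsum] using hν
  · intro hfix
    have h0 : (0 : (Fin d → F) → F) ∈ RMs1 F d := by
      constructor <;> simp
    have hβmem : β ∈ RMs1 F d := by
      rw [← hfix]
      exact ⟨0, h0, by simp⟩
    have := hβmem.2
    rw [hβwt, neg_eq_zero] at this
    exact he0 this
end
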